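/- arXiv:1003.1782 — 8 statements merged into one kernel-verified Lean document; each statement's English description precedes it below -/
import Mathlib

section
/- Fix a = (a_0, a_1, …, a_n) ∈ ℝ_{>0}^{n+1}, a positive integer l, and e = (e_0, e_1, …, e_n) ∈ ℤ_{≥0}^{n+1} with e_0 + e_1 + ⋯ + e_n = l. Then the supremum over all t = (t_0, …, t_n) ∈ ℝ_{>0}^{n+1} of Σ_{i=0}^n e_i log t_i − l·log(Σ_{i=0}^n a_i t_i) equals −l·φ_a(e_0/l, e_1/l, …, e_n/l). -/
/-- The characteristic function `φ_a(x_0, …, x_n) = −Σ x_i log x_i + Σ x_i log a_i`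
(with the convention `0 · log 0 = 0`). -/
noncomputable def charFn {n : ℕ} (a x : Fin (n + 1) → ℝ) : ℝ :=
  -∑ i, x i * Real.log (x i) + ∑ i, x i * Real.log (a i)

/-- Proposition 1.3(1): the supremum over positive `t` of
`Σ e_i log t_i − l log(Σ a_i t_i)` equals `−l · φ_a(e_0/l, …, e_n/l)`. -/
theorem sup_monomial_norm (n : ℕ) (a : Fin (n + 1) → ℝ) (ha : ∀ i, 0 < a i)
    (l : ℕ) (hl : 1 ≤ l) (e : Fin (n + 1) → ℕ) (he : ∑ i, e i = l) :
    IsLUB {y : ℝ | ∃ t : Fin (n + 1) → ℝ, (∀ i, 0 < t i) ∧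
        y = ∑ i, (e i : ℝ) * Real.log (t i) - (l : ℝ) * Real.log (∑ i, a i * t i)}
      (-(l : ℝ) * charFn a (fun i => (e i : ℝ) / (l : ℝ))) := by
  have hl0 : (0:ℝ) < l := by exact_mod_cast hl
  have hlne : (l:ℝ) ≠ 0 := ne_of_gt hl0
  have heR : ∑ i, (e i : ℝ) = (l:ℝ) := by exact_mod_cast he
  set M : ℝ := ∑ i, (e i : ℝ) * Real.log ((e i : ℝ) / l) -
      ∑ i, (e i : ℝ) * Real.log (a i) with hMdef
  have hMeq : -(l : ℝ) * charFn a (fun i => (e i : ℝ) / (l : ℝ)) = M := by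
    have h1 : ∀ i : Fin (n+1), (l:ℝ) * ((e i : ℝ) / l * Real.log ((e i : ℝ)/l)) =
        (e i : ℝ) * Real.log ((e i:ℝ)/l) := by
      intro i; field_simp
    have h2 : ∀ i : Fin (n+1), (l:ℝ) * ((e i : ℝ) / l * Real.log (a i)) =
        (e i : ℝ) * Real.log (a i) := by
      intro i; field_simp
    unfold charFn
    rw [hMdef]
    rw [show -(l:ℝ) * (-∑ i, ((e i:ℝ)/l) * Real.log ((e i:ℝ)/l)
          + ∑ i, ((e i:ℝ)/l) * Real.log (a i))
        = (l:ℝ) * ∑ i, ((e i:ℝ)/l) * Real.log ((e i:ℝ)/l)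
          - (l:ℝ) * ∑ i, ((e i:ℝ)/l) * Real.log (a i) from by ring]
    rw [Finset.mul_sum, Finset.mul_sum]
    congr 1
    · exact Finset.sum_congr rfl (fun i _ => h1 i)
    · exact Finset.sum_congr rfl (fun i _ => h2 i)
  rw [hMeq]
  constructor
  · -- upper bound
    rintro y ⟨t, ht, rfl⟩
    have hS : 0 < ∑ i, a i * t i :=
      Finset.sum_pos (fun i _ => mul_pos (ha i) (ht i)) ⟨0, Finset.mem_univ 0⟩
    set S := ∑ i, a i * t i with hSdef
    have hSne : S ≠ 0 := ne_of_gt hS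
    have key : ∀ i, (e i : ℝ) * Real.log (a i * t i) ≤
        (e i : ℝ) * Real.log ((e i : ℝ) / l) + (e i : ℝ) * Real.log S
          + ((l:ℝ)/S) * (a i * t i) - (e i : ℝ) := by
      intro i
      rcases Nat.eq_zero_or_pos (e i) with h | h
      · have : (0:ℝ) ≤ ((l:ℝ)/S) * (a i * t i) :=
          mul_nonneg (div_nonneg hl0.le hS.le) (mul_pos (ha i) (ht i)).le
        simp [h]
        linarith
      · have hei : (0:ℝ) < (e i : ℝ) := by exact_mod_cast h
        have heine : (e i : ℝ) ≠ 0 := ne_of_gt hei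
        have hat : 0 < a i * t i := mul_pos (ha i) (ht i)
        have h1 : Real.log ((a i * t i * l)/((e i:ℝ) * S)) ≤
            (a i * t i * l)/((e i:ℝ) * S) - 1 :=
          Real.log_le_sub_one_of_pos (div_pos (by positivity) (mul_pos hei hS))
        have hlog : Real.log ((a i * t i * l)/((e i:ℝ) * S)) =
            Real.log (a i * t i) - Real.log ((e i : ℝ) / l) - Real.log S := by
          rw [Real.log_div (by positivity) (by positivity), Real.log_mul (ne_of_gt hat) hlne,
            Real.log_mul heine hSne, Real.log_div heine hlne]
          ring
        rw [hlog] at h1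
        have h2 := mul_le_mul_of_nonneg_left h1 hei.le
        have h3 : (e i : ℝ) * ((a i * t i * l)/((e i:ℝ) * S) - 1) =
            ((l:ℝ)/S) * (a i * t i) - (e i : ℝ) := by
          field_simp
        rw [h3] at h2
        nlinarith [h2]
    have hsum := Finset.sum_le_sum (fun i (_ : i ∈ Finset.univ) => key i)
    have hL : ∑ i, (e i : ℝ) * Real.log (a i * t i) =
        ∑ i, (e i : ℝ) * Real.log (a i) + ∑ i, (e i : ℝ) * Real.log (t i) := by
      rw [← Finset.sum_add_distrib]
      apply Finset.sum_congr rfl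
      intro i _
      rw [Real.log_mul (ne_of_gt (ha i)) (ne_of_gt (ht i))]
      ring
    have hR : ∑ i, ((e i : ℝ) * Real.log ((e i : ℝ) / l) + (e i : ℝ) * Real.log S
          + ((l:ℝ)/S) * (a i * t i) - (e i : ℝ)) =
        ∑ i, (e i : ℝ) * Real.log ((e i : ℝ) / l) + (l:ℝ) * Real.log S + (l:ℝ) - (l:ℝ) := by
      rw [Finset.sum_sub_distrib, Finset.sum_add_distrib, Finset.sum_add_distrib,
        ← Finset.sum_mul, heR, ← Finset.mul_sum, ← hSdef]
      rw [div_mul_cancel₀ _ hSne]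
    rw [hL, hR] at hsum
    simp only [Set.mem_setOf_eq, hMdef]
    linarith
  · -- least upper bound
    intro b hb
    refine le_of_forall_pos_le_add ?_
    intro δ hδ
    set c : ℝ := ∑ i ∈ Finset.univ.filter (fun i => e i = 0), a i with hcdef
    have hc0 : 0 ≤ c := Finset.sum_nonneg (fun i _ => (ha i).le)
    have hexp : 1 < Real.exp (δ / l) := by
      have hpos : (0:ℝ) < δ / l := by positivity
      calc (1:ℝ) = Real.exp 0 := Real.exp_zero.symm
        _ < Real.exp (δ / l) := Real.exp_lt_exp.mpr hpos
    set ε : ℝ := (Real.exp (δ / l) - 1) / (c + 1) with hεdef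
    have hε : 0 < ε := by
      apply div_pos <;> linarith
    set t : Fin (n+1) → ℝ := fun i => if e i = 0 then ε else (e i : ℝ) / (l * a i) with htdef
    have ht : ∀ i, 0 < t i := by
      intro i
      simp only [htdef]
      split
      · exact hε
      · rename_i h
        have hei : (0:ℝ) < (e i : ℝ) := by
          exact_mod_cast Nat.pos_of_ne_zero h
        exact div_pos hei (mul_pos hl0 (ha i))
    have hSval : ∑ i, a i * t i = 1 + ε * c := by
      have : ∀ i ∈ Finset.univ, a i * t i =
          (e i : ℝ) / l + (if e i = 0 then a i * ε else 0) := by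
        intro i _
        simp only [htdef]
        rcases eq_or_ne (e i) 0 with h | h
        · simp [h]
        · rw [if_neg h, if_neg h, add_zero]
          have hane : a i ≠ 0 := ne_of_gt (ha i)
          field_simp
      rw [Finset.sum_congr rfl this, Finset.sum_add_distrib]
      have h1 : ∑ i, (e i : ℝ) / l = 1 := by
        rw [← Finset.sum_div, heR, div_self hlne]
      have h2 : ∑ i, (if e i = 0 then a i * ε else 0) = ε * c := by
        rw [Finset.sum_ite, Finset.sum_const_zero, add_zero, ← Finset.sum_mul, hcdef]
        ring
      rw [h1, h2]
    have hsumlog : ∑ i, (e i : ℝ) * Real.log (t i) = M := by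
      rw [hMdef, ← Finset.sum_sub_distrib]
      apply Finset.sum_congr rfl
      intro i _
      rcases eq_or_ne (e i) 0 with h | h
      · simp [h]
      · have hei : (0:ℝ) < (e i : ℝ) := by exact_mod_cast Nat.pos_of_ne_zero h
        simp only [htdef, if_neg h]
        rw [← mul_sub, Real.log_div (ne_of_gt hei) (ne_of_gt (mul_pos hl0 (ha i))),
          Real.log_div (ne_of_gt hei) hlne, Real.log_mul hlne (ne_of_gt (ha i))]
        ring
    have hmem : M - (l:ℝ) * Real.log (1 + ε * c) ∈
        {y : ℝ | ∃ t : Fin (n + 1) → ℝ, (∀ i, 0 < t i) ∧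
          y = ∑ i, (e i : ℝ) * Real.log (t i) - (l : ℝ) * Real.log (∑ i, a i * t i)} := by
      exact ⟨t, ht, by rw [hsumlog, hSval]⟩
    have hble := hb hmem
    have hlogle : Real.log (1 + ε * c) ≤ δ / l := by
      have hpos : (0:ℝ) < 1 + ε * c := by nlinarith [mul_nonneg hε.le hc0]
      rw [Real.log_le_iff_le_exp hpos]
      have : ε * c ≤ ε * (c + 1) := by nlinarith
      have h2 : ε * (c + 1) = Real.exp (δ / l) - 1 := by
        rw [hεdef, div_mul_cancel₀]
        linarith
      linarith
    have : (l:ℝ) * Real.log (1 + ε * c) ≤ δ := by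
      calc (l:ℝ) * Real.log (1 + ε * c) ≤ (l:ℝ) * (δ / l) :=
            mul_le_mul_of_nonneg_left hlogle hl0.le
        _ = δ := by field_simp
    linarith
end

section
/- Fix a = (a_0, a_1, …, a_n) ∈ ℝ_{>0}^{n+1}, a positive integer l, and e = (e_1, …, e_n) ∈ ℤ_{≥0}^n with e_1 + ⋯ + e_n ≤ l; set e_0 = l − e_1 − ⋯ − e_n. Then ∫_{ℝ_{>0}^n} n!·a_0·a_1⋯a_n · x_1^{e_1}⋯x_n^{e_n} / (a_0 + a_1 x_1 + ⋯ + a_n x_n)^{n+l+1} dx_1⋯dx_n = 1 / ( C(n+l, n) · (l! / (e_0!·e_1!⋯e_n!)) · a_0^{e_0}·a_1^{e_1}⋯a_n^{e_n} ), where C(n+l, n) is the binomial coefficient. -/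
open MeasureTheory Set Filter Topology
open scoped ENNReal

lemma meas1 (c aa : ℝ) (e m : ℕ) :
    Measurable (fun x : ℝ => x ^ e / (c + aa * x) ^ m) := by fun_prop

lemma intOn (c aa : ℝ) (hc : 0 < c) (ha : 0 < aa) (e m : ℕ) (hm : e + 2 ≤ m) :
    IntegrableOn (fun x : ℝ => x ^ e / (c + aa * x) ^ m) (Ioi 0) := by
  have hIoi : Ioi (0:ℝ) = Ioc 0 1 ∪ Ioi 1 := (Ioc_union_Ioi_eq_Ioi (by norm_num)).symm
  rw [hIoi]
  apply IntegrableOn.union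
  · have hcont : ContinuousOn (fun x : ℝ => x ^ e / (c + aa * x) ^ m) (Icc 0 1) := by
      apply ContinuousOn.div (by fun_prop) (by fun_prop)
      intro x hx
      have : 0 < c + aa * x := by nlinarith [hx.1]
      positivity
    exact (hcont.integrableOn_Icc).mono_set Ioc_subset_Icc_self
  · have hint : IntegrableOn (fun x : ℝ => aa⁻¹ ^ m * x ^ ((e : ℝ) - m)) (Ioi 1) := by
      apply Integrable.const_mul
      apply integrableOn_Ioi_rpow_of_lt _ one_pos
      have : (e:ℝ) + 2 ≤ m := by exact_mod_cast hm
      linarith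
    apply hint.mono' ((meas1 c aa e m).aestronglyMeasurable.restrict)
    filter_upwards [ae_restrict_mem measurableSet_Ioi] with x hx
    have hx0 : (0:ℝ) < x := lt_trans one_pos hx
    have hden : (0:ℝ) < c + aa * x := by nlinarith
    have h1 : (aa * x) ^ m ≤ (c + aa * x) ^ m := by
      apply pow_le_pow_left₀ (by positivity) (by linarith)
    rw [Real.norm_eq_abs, abs_of_nonneg (by positivity)]
    rw [Real.rpow_sub hx0, Real.rpow_natCast, Real.rpow_natCast]
    have h2 : aa⁻¹ ^ m * (x ^ e / x ^ m) = x ^ e / (aa * x) ^ m := by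
      rw [mul_pow]; field_simp
      rw [← mul_pow, one_div_mul_cancel (ne_of_gt ha), one_pow]
    rw [h2]
    gcongr


lemma tendsto_pow_mul_inv (c aa : ℝ) (hc : 0 < c) (ha : 0 < aa) (k p : ℕ) (hkp : k < p) :
    Tendsto (fun x : ℝ => x ^ k * (((c + aa * x) ^ p)⁻¹)) atTop (𝓝 0) := by
  have hu : Tendsto (fun x : ℝ => c + aa * x) atTop atTop :=
    tendsto_atTop_add_const_left _ c (tendsto_id.const_mul_atTop ha)
  have hg : Tendsto (fun x : ℝ => aa⁻¹ ^ k * (((c + aa * x) ^ (p - k))⁻¹)) atTop (𝓝 0) := by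
    have : Tendsto (fun x : ℝ => (c + aa * x) ^ (p - k)) atTop atTop :=
      (tendsto_pow_atTop (n := p - k) (by omega)).comp hu
    have h0 := this.inv_tendsto_atTop
    have := h0.const_mul (aa⁻¹ ^ k)
    simpa using this
  apply squeeze_zero' _ _ hg
  · filter_upwards [eventually_gt_atTop (0:ℝ)] with x hx
    positivity
  · filter_upwards [eventually_gt_atTop (0:ℝ)] with x hx
    have hden : (0:ℝ) < c + aa * x := by nlinarith
    have h1 : x ^ k ≤ (aa⁻¹ * (c + aa * x)) ^ k := by
      apply pow_le_pow_left₀ (le_of_lt hx)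
      rw [le_inv_mul_iff₀ ha]
      linarith
    calc x ^ k * ((c + aa * x) ^ p)⁻¹
        ≤ (aa⁻¹ * (c + aa * x)) ^ k * ((c + aa * x) ^ p)⁻¹ := by gcongr
      _ = aa⁻¹ ^ k * ((c + aa * x) ^ (p - k))⁻¹ := by
          rw [mul_pow]
          have hp : p = k + (p - k) := by omega
          rw [hp, pow_add]
          field_simp
          ring
          congr 1; omega

lemma hasDerivAt_inv_pow (c aa : ℝ) (hc : 0 < c) (ha : 0 < aa) (p : ℕ) {x : ℝ} (hx : 0 ≤ x) :
    HasDerivAt (fun y : ℝ => ((c + aa * y) ^ p)⁻¹)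
      (-((p : ℝ) * (c + aa * x) ^ (p - 1) * aa) / ((c + aa * x) ^ p) ^ 2) x := by
  have h1 : HasDerivAt (fun y : ℝ => c + aa * y) aa x := by
    simpa using ((hasDerivAt_id x).const_mul aa).const_add c
  have hu : (0:ℝ) < c + aa * x := by nlinarith
  exact (h1.pow p).inv (pow_ne_zero _ (ne_of_gt hu))

lemma int_val (e : ℕ) : ∀ (c aa : ℝ), 0 < c → 0 < aa → ∀ m : ℕ, e + 2 ≤ m →
    ∫ x in Ioi (0:ℝ), x ^ e / (c + aa * x) ^ m
      = ((e.factorial : ℝ) * ((m - e - 2).factorial : ℝ)) /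
        (((m-1).factorial : ℝ) * aa ^ (e+1) * c ^ (m - e - 1)) := by
  induction e with
  | zero =>
    intro c aa hc ha m hm
    set K : ℝ := -((((m-1:ℕ)):ℝ) * aa)⁻¹ with hK
    have hm1 : (((m-1:ℕ)):ℝ) ≠ 0 := Nat.cast_ne_zero.mpr (by omega)
    have hder : ∀ x : ℝ, 0 ≤ x →
        HasDerivAt (fun y : ℝ => ((c + aa * y) ^ (m-1))⁻¹ * K) (x ^ 0 / (c + aa * x) ^ m) x := by
      intro x hx
      have h := (hasDerivAt_inv_pow c aa hc ha (m-1) hx).mul_const K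
      have hu : (0:ℝ) < c + aa * x := by nlinarith
      have key : ((c + aa * x) ^ (m-1)) ^ 2 = (c + aa * x) ^ (m-1-1) * (c + aa * x) ^ m := by
        rw [← pow_mul, ← pow_add]; congr 1; omega
      refine h.congr_deriv ?_
      rw [hK, key]
      set u := c + aa * x with hu'
      set P : ℝ := ((m-1:ℕ):ℝ) with hP'
      have h1 : u ^ (m-1-1) ≠ 0 := pow_ne_zero _ (ne_of_gt hu)
      have h2 : u ^ m ≠ 0 := pow_ne_zero _ (ne_of_gt hu)
      have hP : P ≠ 0 := hm1
      have haa : aa ≠ 0 := ne_of_gt ha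
      field_simp
    have htend : Tendsto (fun y : ℝ => ((c + aa * y) ^ (m-1))⁻¹ * K) atTop (𝓝 0) := by
      have := (tendsto_pow_mul_inv c aa hc ha 0 (m-1) (by omega)).mul_const K
      simpa using this
    have h := integral_Ioi_of_hasDerivAt_of_tendsto
      ((hder 0 le_rfl).continuousAt.continuousWithinAt)
      (fun x hx => hder x (le_of_lt hx)) (intOn c aa hc ha 0 m (by omega)) htend
    rw [h]
    have hfac : ((m-1).factorial : ℝ) = ((m-1:ℕ)) * ((m - 0 - 2).factorial : ℝ) := by
      have h2 : m - 1 = (m - 0 - 2) + 1 := by omega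
      rw [h2, Nat.factorial_succ]
      push_cast
      ring
    have hc1 : c ^ (m - 0 - 1) = c ^ (m - 1) := by norm_num
    rw [hfac, hc1, hK]
    simp only [mul_zero, add_zero]
    set P : ℝ := ((m-1:ℕ):ℝ) with hP'
    set F : ℝ := ((m - 0 - 2).factorial : ℝ) with hF'
    have hF : F ≠ 0 := by rw [hF']; positivity
    have hP : P ≠ 0 := hm1
    have hcm : c ^ (m-1) ≠ 0 := pow_ne_zero _ (ne_of_gt hc)
    have haa : aa ≠ 0 := ne_of_gt ha
    field_simp
    ring
  | succ e IH =>
    intro c aa hc ha m hm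
    have hm1 : (((m-1:ℕ)):ℝ) ≠ 0 := Nat.cast_ne_zero.mpr (by omega)
    set f' : ℝ → ℝ := fun x => ((e+1:ℕ) : ℝ) * (x ^ e / (c + aa * x) ^ (m-1))
        - (((m-1:ℕ)):ℝ) * aa * (x ^ (e+1) / (c + aa * x) ^ m) with hf'
    have hder : ∀ x : ℝ, 0 ≤ x →
        HasDerivAt (fun y : ℝ => y ^ (e+1) * ((c + aa * y) ^ (m-1))⁻¹) (f' x) x := by
      intro x hx
      have h := (hasDerivAt_pow (e+1) x).mul (hasDerivAt_inv_pow c aa hc ha (m-1) hx)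
      have hu : (0:ℝ) < c + aa * x := by nlinarith
      have key : ((c + aa * x) ^ (m-1)) ^ 2 = (c + aa * x) ^ (m-1-1) * (c + aa * x) ^ m := by
        rw [← pow_mul, ← pow_add]; congr 1; omega
      refine h.congr_deriv ?_
      rw [hf', key]
      set u := c + aa * x with hu'
      set P : ℝ := ((m-1:ℕ):ℝ) with hP'
      have h1 : u ^ (m-1-1) ≠ 0 := pow_ne_zero _ (ne_of_gt hu)
      have h2 : u ^ m ≠ 0 := pow_ne_zero _ (ne_of_gt hu)
      have h3 : u ^ (m-1) ≠ 0 := pow_ne_zero _ (ne_of_gt hu)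
      have hP : P ≠ 0 := hm1
      have haa : aa ≠ 0 := ne_of_gt ha
      field_simp
      ring
      rw [hu', Nat.add_sub_cancel_left]; ring
    have htend : Tendsto (fun y : ℝ => y ^ (e+1) * ((c + aa * y) ^ (m-1))⁻¹) atTop (𝓝 0) :=
      tendsto_pow_mul_inv c aa hc ha (e+1) (m-1) (by omega)
    have hint1 : IntegrableOn (fun x : ℝ => x ^ e / (c + aa * x) ^ (m-1)) (Ioi 0) :=
      intOn c aa hc ha e (m-1) (by omega)
    have hint2 : IntegrableOn (fun x : ℝ => x ^ (e+1) / (c + aa * x) ^ m) (Ioi 0) :=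
      intOn c aa hc ha (e+1) m (by omega)
    have hintf' : IntegrableOn f' (Ioi 0) :=
      (hint1.const_mul _).sub (hint2.const_mul _)
    have h := integral_Ioi_of_hasDerivAt_of_tendsto
      ((hder 0 le_rfl).continuousAt.continuousWithinAt)
      (fun x hx => hder x (le_of_lt hx)) hintf' htend
    simp only [zero_pow (Nat.succ_ne_zero e), zero_mul, sub_zero, zero_sub, neg_zero] at h
    rw [hf'] at h
    rw [integral_sub (hint1.const_mul _) (hint2.const_mul _),
      integral_const_mul, integral_const_mul, IH c aa hc ha (m-1) (by omega)] at h
    -- solve for the integral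
    have haa : aa ≠ 0 := ne_of_gt ha
    have hX : ∫ x in Ioi (0:ℝ), x ^ (e+1) / (c + aa * x) ^ m
        = ((e+1:ℕ) : ℝ) * (((e.factorial : ℝ) * (((m-1) - e - 2).factorial : ℝ)) /
            (((m-1-1).factorial : ℝ) * aa ^ (e+1) * c ^ ((m-1) - e - 1)))
          / ((((m-1:ℕ)):ℝ) * aa) := by
      field_simp at h ⊢
      linarith [h]
    rw [hX]
    have k1 : (m-1) - e - 2 = m - (e+1) - 2 := by omega
    have k2 : (m-1) - e - 1 = m - (e+1) - 1 := by omega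
    have k3 : ((m-1).factorial : ℝ) = (((m-1:ℕ)):ℝ) * ((m-1-1).factorial : ℝ) := by
      have h2 : m - 1 = (m - 1 - 1) + 1 := by omega
      rw [h2, Nat.factorial_succ]
      push_cast [← h2]
      ring
    have k4 : ((e+1).factorial : ℝ) = ((e+1:ℕ) : ℝ) * (e.factorial : ℝ) := by
      rw [Nat.factorial_succ]; push_cast; ring
    rw [k1, k2, k3, k4]
    have hfp : (0:ℝ) < ((m-1-1).factorial : ℝ) := by positivity
    field_simp
    ring

lemma multi : ∀ (n : ℕ) (c : ℝ), 0 < c → ∀ (a : Fin n → ℝ), (∀ i, 0 < a i) →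
    ∀ (m : ℕ) (e : Fin n → ℕ), (∑ i, e i) + n + 1 ≤ m →
    (∫⁻ x in Set.univ.pi (fun _ : Fin n => Ioi (0:ℝ)),
        ENNReal.ofReal ((∏ i, x i ^ e i) / (c + ∑ i, a i * x i) ^ m))
      = ENNReal.ofReal ((∏ i, ((e i).factorial : ℝ)) * (((m - n - (∑ i, e i) - 1).factorial : ℝ)) /
          (((m-1).factorial : ℝ) * c ^ (m - n - ∑ i, e i) * ∏ i, a i ^ (e i + 1))) := by
  intro n
  induction n with
  | zero =>
    intro c hc a ha m e hme
    have hs : Set.univ.pi (fun _ : Fin 0 => Ioi (0:ℝ)) = Set.univ := by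
      ext x; simp
    simp only [Finset.univ_eq_empty, Finset.prod_empty, Finset.sum_empty, hs,
      Measure.restrict_univ, add_zero, one_mul, mul_one]
    rw [lintegral_const]
    have hvol : (volume : Measure (Fin 0 → ℝ)) Set.univ = 1 := by
      rw [MeasureTheory.volume_pi, Measure.pi_empty_univ]
    rw [hvol, mul_one]
    congr 1
    have h1 : m - 0 - 0 - 1 = m - 1 := by omega
    have h2 : m - 0 - 0 = m := by omega
    rw [h1, h2]
    have : ((m-1).factorial : ℝ) ≠ 0 := by positivity
    field_simp
  | succ n IH =>
    intro c hc a ha m e hme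
    set E := MeasurableEquiv.piFinSuccAbove (fun _ : Fin (n+1) => ℝ) 0 with hE
    set S : Set (Fin n → ℝ) := Set.univ.pi (fun _ => Ioi (0:ℝ)) with hS
    set G : ℝ × (Fin n → ℝ) → ℝ≥0∞ := fun z =>
      ENNReal.ofReal ((z.1 ^ (e 0) * ∏ j, z.2 j ^ e j.succ) /
        (c + (a 0 * z.1 + ∑ j, a j.succ * z.2 j)) ^ m) with hG
    have hGmeas : Measurable G := by
      rw [hG]; fun_prop
    have hFG : ∀ x : Fin (n+1) → ℝ,
        ENNReal.ofReal ((∏ i, x i ^ e i) / (c + ∑ i, a i * x i) ^ m) = G (E x) := by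
      intro x
      rw [hG, hE]
      simp only [MeasurableEquiv.piFinSuccAbove_apply, Fin.insertNthEquiv_symm_apply,
        Fin.removeNth, Fin.succAbove_zero]
      rw [Fin.prod_univ_succ, Fin.sum_univ_succ]
    have hpre : Set.univ.pi (fun _ : Fin (n+1) => Ioi (0:ℝ)) = E ⁻¹' ((Ioi (0:ℝ)) ×ˢ S) := by
      rw [hE, hS]
      ext x
      simp only [Set.mem_pi, Set.mem_univ, true_implies, Set.mem_preimage,
        MeasurableEquiv.piFinSuccAbove_apply, Fin.insertNthEquiv_symm_apply,
        Fin.removeNth, Fin.succAbove_zero, Set.mem_prod, Set.mem_Ioi]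
      rw [Fin.forall_iff_succAbove (0 : Fin (n+1))]
      simp [Fin.succAbove_zero]
    simp_rw [hFG]
    rw [hpre]
    rw [(volume_preserving_piFinSuccAbove (fun _ : Fin (n+1) => ℝ) 0).setLIntegral_comp_preimage_emb
      (MeasurableEquiv.measurableEmbedding E) G _]
    rw [Measure.volume_eq_prod, ← Measure.prod_restrict]
    rw [lintegral_prod G hGmeas.aemeasurable]
    -- abbreviations
    set s' : ℕ := ∑ j : Fin n, e (Fin.succ j) with hs'
    have hsum : ∑ i, e i = e 0 + s' := by rw [Fin.sum_univ_succ]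
    set M : ℕ := m - n - s' with hM
    have hM2 : e 0 + 2 ≤ M := by omega
    have hMm : s' + n + 1 ≤ m := by omega
    set C : ℝ := ((∏ j : Fin n, ((e (Fin.succ j)).factorial : ℝ)) * ((M - 1).factorial : ℝ)) /
        (((m-1).factorial : ℝ) * ∏ j : Fin n, a (Fin.succ j) ^ (e (Fin.succ j) + 1)) with hC
    have hprodpos : (0:ℝ) < ∏ j : Fin n, a (Fin.succ j) ^ (e (Fin.succ j) + 1) :=
      Finset.prod_pos fun j _ => pow_pos (ha _) _
    have hCpos : 0 < C := by
      rw [hC]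
      have h1 : (0:ℝ) < ∏ j : Fin n, ((e (Fin.succ j)).factorial : ℝ) :=
        Finset.prod_pos fun j _ => by positivity
      positivity
    -- inner integral
    have hinner : ∀ t ∈ Ioi (0:ℝ),
        (∫⁻ y in S, G (t, y)) = ENNReal.ofReal (C * (t ^ (e 0) / (c + a 0 * t) ^ M)) := by
      intro t ht
      have ht0 : (0:ℝ) < t := ht
      have hct : 0 < c + a 0 * t := by have := ha 0; nlinarith
      have step1 : ∀ y : Fin n → ℝ, G (t, y) = ENNReal.ofReal (t ^ (e 0)) *
          ENNReal.ofReal ((∏ j, y j ^ e (Fin.succ j)) /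
            ((c + a 0 * t) + ∑ j, a (Fin.succ j) * y j) ^ m) := by
        intro y
        rw [hG]
        simp only []
        rw [show c + (a 0 * t + ∑ j, a (Fin.succ j) * y j)
            = (c + a 0 * t) + ∑ j, a (Fin.succ j) * y j by ring]
        rw [mul_div_assoc, ENNReal.ofReal_mul (by positivity)]
      simp_rw [step1]
      rw [lintegral_const_mul _ (by fun_prop)]
      rw [IH (c + a 0 * t) hct (fun j => a (Fin.succ j)) (fun j => ha _) m
        (fun j => e (Fin.succ j)) (by have h := hMm; rw [hs'] at h; simpa using h)]
      rw [← ENNReal.ofReal_mul (by positivity)]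
      congr 1
      rw [hC]
      have hMfac : ((M-1).factorial:ℝ) = ((m - n - s' - 1).factorial : ℝ) := by rw [hM]
      have hmf : ((m-1).factorial : ℝ) ≠ 0 := by positivity
      have hcM : (c + a 0 * t) ^ (m - n - s') = (c + a 0 * t) ^ M := by rw [hM]
      rw [hcM]
      have hctM : (c + a 0 * t) ^ M ≠ 0 := by positivity
      field_simp
      ring
    rw [setLIntegral_congr_fun measurableSet_Ioi
      (fun t ht => hinner t ht)]
    -- outer integral
    have hint : IntegrableOn (fun t : ℝ => C * (t ^ (e 0) / (c + a 0 * t) ^ M)) (Ioi 0) :=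
      (intOn c (a 0) hc (ha 0) (e 0) M hM2).const_mul C
    have hnn : 0 ≤ᵐ[volume.restrict (Ioi (0:ℝ))]
        (fun t : ℝ => C * (t ^ (e 0) / (c + a 0 * t) ^ M)) := by
      filter_upwards [ae_restrict_mem measurableSet_Ioi] with t ht
      have ht0 : (0:ℝ) < t := ht
      have hct : 0 < c + a 0 * t := by have := ha 0; nlinarith
      positivity
    rw [← ofReal_integral_eq_lintegral_ofReal hint hnn]
    rw [MeasureTheory.integral_const_mul, int_val (e 0) c (a 0) hc (ha 0) M hM2]
    -- final arithmetic
    congr 1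
    rw [hC]
    rw [Fin.prod_univ_succ (fun i => ((e i).factorial : ℝ)),
      Fin.prod_univ_succ (fun i => a i ^ (e i + 1))]
    have k1 : M - e 0 - 2 = m - (n+1) - (∑ i, e i) - 1 := by omega
    have k2 : M - e 0 - 1 = m - (n+1) - (∑ i, e i) := by omega
    rw [k1, k2]
    have hMfacpos : ((M-1).factorial : ℝ) ≠ 0 := by positivity
    have hmfacpos : ((m-1).factorial : ℝ) ≠ 0 := by positivity
    have ha0 : a 0 ^ (e 0 + 1) ≠ 0 := by have := ha 0; positivity
    have hcpow : c ^ (m - (n+1) - (∑ i, e i)) ≠ 0 := by positivity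
    field_simp



/-- Proposition 1.3(2): the multiple integral over the positive orthant
`∫ n! a_0⋯a_n x_1^{e_1}⋯x_n^{e_n}/(a_0 + a_1x_1 + ⋯ + a_nx_n)^{n+l+1} dx
  = 1/( C(n+l,n) · (l!/(e_0!⋯e_n!)) · a_0^{e_0}⋯a_n^{e_n} )`,
where `e_0 = l − e_1 − ⋯ − e_n` (the right-hand side is written in the
equivalent form `(e_0! ∏ e_i!)/(C(n+l,n) · l! · a_0^{e_0} ∏ a_i^{e_i})`). -/
theorem integral_monomial_L2_norm (n : ℕ) (a0 : ℝ) (ha0 : 0 < a0)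
    (a : Fin n → ℝ) (ha : ∀ i, 0 < a i)
    (l : ℕ) (hl : 1 ≤ l) (e : Fin n → ℕ) (he : ∑ i, e i ≤ l) :
    ∫ x in Set.univ.pi (fun _ : Fin n => Set.Ioi (0 : ℝ)),
        (Nat.factorial n : ℝ) * a0 * (∏ i, a i) * (∏ i, x i ^ e i) /
          (a0 + ∑ i, a i * x i) ^ (n + l + 1) =
      ((Nat.factorial (l - ∑ i, e i) : ℝ) * ∏ i, (Nat.factorial (e i) : ℝ)) /
        ((Nat.choose (n + l) n : ℝ) * (Nat.factorial l : ℝ) *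
          a0 ^ (l - ∑ i, e i) * ∏ i, a i ^ (e i)) := by
  have hm : (∑ i, e i) + n + 1 ≤ n + l + 1 := by omega
  have hSmeas : MeasurableSet (Set.univ.pi (fun _ : Fin n => Ioi (0:ℝ))) :=
    MeasurableSet.univ_pi (fun _ => measurableSet_Ioi)
  set K : ℝ := (Nat.factorial n : ℝ) * a0 * (∏ i, a i) with hKdef
  have hprodA : (0:ℝ) < ∏ i, a i := Finset.prod_pos fun i _ => ha i
  have hK : (0:ℝ) ≤ K := by rw [hKdef]; positivity
  have hnn : 0 ≤ᵐ[volume.restrict (Set.univ.pi (fun _ : Fin n => Ioi (0:ℝ)))]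
      (fun x : Fin n → ℝ => K * (∏ i, x i ^ e i) / (a0 + ∑ i, a i * x i) ^ (n + l + 1)) := by
    filter_upwards [ae_restrict_mem hSmeas] with x hx
    simp only [Set.mem_pi, Set.mem_univ, true_implies, Set.mem_Ioi] at hx
    have h1 : (0:ℝ) ≤ ∏ i, x i ^ e i :=
      Finset.prod_nonneg fun i _ => pow_nonneg (le_of_lt (hx i)) _
    have h2 : (0:ℝ) ≤ ∑ i, a i * x i :=
      Finset.sum_nonneg fun i _ => le_of_lt (mul_pos (ha i) (hx i))
    have h3 : (0:ℝ) < a0 + ∑ i, a i * x i := by linarith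
    positivity
  have hmeas : Measurable (fun x : Fin n → ℝ =>
      K * (∏ i, x i ^ e i) / (a0 + ∑ i, a i * x i) ^ (n + l + 1)) := by fun_prop
  rw [integral_eq_lintegral_of_nonneg_ae hnn hmeas.aestronglyMeasurable]
  simp_rw [mul_div_assoc (K), ENNReal.ofReal_mul hK]
  rw [lintegral_const_mul _ (by fun_prop)]
  rw [multi n a0 ha0 a ha (n + l + 1) e hm]
  have k1 : n + l + 1 - n - (∑ i, e i) - 1 = l - ∑ i, e i := by omega
  have k2 : n + l + 1 - n - (∑ i, e i) = (l - ∑ i, e i) + 1 := by omega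
  have k3 : n + l + 1 - 1 = n + l := by omega
  rw [k1, k2, k3]
  have hV : (0:ℝ) ≤ (∏ i, ((e i).factorial : ℝ)) * (((l - ∑ i, e i).factorial : ℝ)) /
      (((n+l).factorial : ℝ) * a0 ^ ((l - ∑ i, e i) + 1) * ∏ i, a i ^ (e i + 1)) := by
    have h1 : (0:ℝ) < ∏ i, ((e i).factorial : ℝ) := Finset.prod_pos fun i _ => by positivity
    have h2 : (0:ℝ) < ∏ i, a i ^ (e i + 1) := Finset.prod_pos fun i _ => pow_pos (ha i) _
    positivity
  rw [← ENNReal.ofReal_mul hK, ENNReal.toReal_ofReal (by nlinarith [hV, hK, mul_nonneg hK hV])]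
  -- final real arithmetic
  have hfact : ((n+l).factorial : ℝ) = ((n+l).choose n : ℝ) * (n.factorial : ℝ) * (l.factorial : ℝ) := by
    have h := Nat.choose_mul_factorial_mul_factorial (Nat.le_add_right n l)
    have h2 : n + l - n = l := by omega
    rw [h2] at h
    exact_mod_cast h.symm
  have hsplit : ∏ i, a i ^ (e i + 1) = (∏ i, a i ^ (e i)) * ∏ i, a i := by
    rw [← Finset.prod_mul_distrib]
    exact Finset.prod_congr rfl fun i _ => pow_succ _ _
  rw [hfact, hsplit, pow_succ, hKdef]
  have c1 : ((n+l).choose n : ℝ) ≠ 0 := by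
    have := Nat.choose_pos (Nat.le_add_right n l); positivity
  have c2 : (n.factorial : ℝ) ≠ 0 := by positivity
  have c3 : (l.factorial : ℝ) ≠ 0 := by positivity
  have c4 : a0 ^ (l - ∑ i, e i) ≠ 0 := by positivity
  have c5 : (∏ i, a i ^ (e i)) ≠ 0 := ne_of_gt (Finset.prod_pos fun i _ => pow_pos (ha i) _)
  have c6 : (∏ i, a i) ≠ 0 := ne_of_gt hprodA
  have c7 : a0 ≠ 0 := ne_of_gt ha0
  field_simp
end

section
/- Fix a = (a_0, a_1, …, a_n) ∈ ℝ_{>0}^{n+1} and set A_n = (n+2)/2 and B_n = (n+2)·log(√(2π)) + (n+2)/12. Then for every integer l ≥ 1 and every (k_0, …, k_n) ∈ ℤ_{≥0}^{n+1} with k_0 + ⋯ + k_n = l, one has | (1/l)·log( (l!/(k_0!⋯k_n!)) · a_0^{k_0}⋯a_n^{k_n} ) − φ_a(k_0/l, …, k_n/l) | ≤ (1/l)·(A_n·log l + B_n). -/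
open Real Stirling Finset

section AuxStirling

-- stirlingSeq bounds
lemma stirling_ge (m : ℕ) : Real.sqrt π ≤ stirlingSeq (m + 1) :=
  stirlingSeq'_antitone.le_of_tendsto
    (tendsto_stirlingSeq_sqrt_pi.comp (Filter.tendsto_add_atTop_nat 1)) m

lemma stirling_le (m : ℕ) : stirlingSeq (m + 1) ≤ Real.exp 1 / Real.sqrt 2 := by
  have := stirlingSeq'_antitone (Nat.zero_le m)
  simpa [stirlingSeq_one] using this

lemma one_le_log_sqrt_two_pi : (1:ℝ) ≤ Real.log (Real.sqrt (2 * π)) + 1/12 := by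
  have h2π : (0:ℝ) < 2 * π := by positivity
  rw [Real.log_sqrt h2π.le]
  have h : (11:ℝ)/6 ≤ Real.log (2*π) := by
    rw [Real.le_log_iff_exp_le h2π]
    have h6 : Real.exp (11/6) ^ 6 ≤ (2*π)^6 := by
      have e1 : Real.exp (11/6) ^ 6 = Real.exp 1 ^ 11 := by
        rw [← Real.exp_nat_mul, ← Real.exp_nat_mul]
        norm_num
      rw [e1]
      have h1 : Real.exp 1 ^ 11 ≤ (2.7182818286:ℝ) ^ 11 :=
        pow_le_pow_left₀ (Real.exp_pos 1).le Real.exp_one_lt_d9.le 11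
      have h2 : ((2:ℝ) * 3.141592) ^ 6 ≤ (2*π)^6 := by
        apply pow_le_pow_left₀ (by norm_num)
        linarith [Real.pi_gt_d6]
      calc Real.exp 1 ^ 11 ≤ (2.7182818286:ℝ) ^ 11 := h1
        _ ≤ ((2:ℝ) * 3.141592) ^ 6 := by norm_num
        _ ≤ (2*π)^6 := h2
    exact le_of_pow_le_pow_left₀ (by norm_num) h2π.le h6
  linarith

noncomputable def fAux (m : ℕ) : ℝ :=
  Real.log (Nat.factorial m) - m * Real.log m + m

lemma fAux_eq (m : ℕ) (hm : 1 ≤ m) :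
    fAux m = Real.log (stirlingSeq m) + 1/2 * Real.log 2 + 1/2 * Real.log m := by
  have hm0 : (0:ℝ) < m := by exact_mod_cast hm
  have hlog : Real.log ((m:ℝ) / Real.exp 1) = Real.log m - 1 := by
    rw [Real.log_div hm0.ne' (Real.exp_ne_zero 1), Real.log_exp]
  have h2 : Real.log (2 * (m:ℝ)) = Real.log 2 + Real.log m :=
    Real.log_mul two_ne_zero hm0.ne'
  have h := log_stirlingSeq_formula m
  rw [h2, hlog] at h
  unfold fAux
  linarith

lemma sqrt_pi_ge_one : (1:ℝ) ≤ Real.sqrt π := by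
  rw [show (1:ℝ) = Real.sqrt 1 by simp]
  exact Real.sqrt_le_sqrt (by linarith [Real.pi_gt_three])

lemma fAux_nonneg (m : ℕ) : 0 ≤ fAux m := by
  match m with
  | 0 => simp [fAux]
  | (m+1) =>
    rw [fAux_eq (m+1) (Nat.le_add_left 1 m)]
    have h1 : (0:ℝ) ≤ Real.log (stirlingSeq (m+1)) := by
      apply Real.log_nonneg
      calc (1:ℝ) ≤ Real.sqrt π := sqrt_pi_ge_one
        _ ≤ stirlingSeq (m+1) := stirling_ge m
    have h2 : (0:ℝ) ≤ Real.log 2 := Real.log_nonneg (by norm_num)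
    have h3 : (0:ℝ) ≤ Real.log (m+1) := Real.log_nonneg (by exact_mod_cast Nat.le_add_left 1 m)
    push_cast
    push_cast at h3
    linarith

lemma fAux_le (m l : ℕ) (hm : m ≤ l) (hl : 1 ≤ l) :
    fAux m ≤ 1/2 * Real.log l + 1 := by
  have hll : (0:ℝ) ≤ Real.log l := Real.log_nonneg (by exact_mod_cast hl)
  match m with
  | 0 => simp only [fAux]; norm_num; linarith
  | (m+1) =>
    rw [fAux_eq (m+1) (Nat.le_add_left 1 m)]
    have hs : Real.log (stirlingSeq (m+1)) ≤ 1 - 1/2 * Real.log 2 := by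
      have h1 : Real.log (stirlingSeq (m+1)) ≤ Real.log (Real.exp 1 / Real.sqrt 2) := by
        exact Real.log_le_log (stirlingSeq'_pos m) (stirling_le m)
      have h2 : Real.log (Real.exp 1 / Real.sqrt 2) = 1 - 1/2 * Real.log 2 := by
        rw [Real.log_div (Real.exp_ne_zero 1) (by positivity), Real.log_exp,
          Real.log_sqrt (by norm_num)]
        ring
      linarith
    have hlm : Real.log ((m:ℝ)+1) ≤ Real.log l := by
      apply Real.log_le_log (by positivity)
      exact_mod_cast hm
    push_cast
    linarith
end AuxStirling


/-- Lemma 1.4: the uniform Stirling-type estimate with `A_n = (n+2)/2` and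
`B_n = (n+2)·log √(2π) + (n+2)/12`. -/
theorem stirling_multinomial_estimate (n : ℕ) (a : Fin (n + 1) → ℝ)
    (ha : ∀ i, 0 < a i) (l : ℕ) (hl : 1 ≤ l)
    (k : Fin (n + 1) → ℕ) (hk : ∑ i, k i = l) :
    |(1 / (l : ℝ)) *
        Real.log (((Nat.factorial l : ℝ) / ∏ i, (Nat.factorial (k i) : ℝ)) *
          ∏ i, a i ^ (k i)) -
      charFn a (fun i => (k i : ℝ) / (l : ℝ))| ≤
    (1 / (l : ℝ)) *
      (((n : ℝ) + 2) / 2 * Real.log l +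
        (((n : ℝ) + 2) * Real.log (Real.sqrt (2 * Real.pi)) + ((n : ℝ) + 2) / 12)) := by
  have hL : (0:ℝ) < (l:ℝ) := by exact_mod_cast hl
  set L : ℝ := (l:ℝ) with hLdef
  have hsumk : (∑ i, (k i : ℝ)) = L := by
    rw [hLdef, ← hk]; push_cast; try rfl
  have hfactpos : ∀ m : ℕ, (0:ℝ) < (Nat.factorial m : ℝ) := fun m => by
    exact_mod_cast m.factorial_pos
  have hB : (0:ℝ) < ∏ i, (Nat.factorial (k i) : ℝ) :=
    Finset.prod_pos fun i _ => hfactpos _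
  have hC : (0:ℝ) < ∏ i, a i ^ (k i) :=
    Finset.prod_pos fun i _ => pow_pos (ha i) _
  have hlogsplit :
      Real.log (((Nat.factorial l : ℝ) / ∏ i, (Nat.factorial (k i) : ℝ)) * ∏ i, a i ^ (k i))
        = Real.log (Nat.factorial l) - ∑ i, Real.log (Nat.factorial (k i))
          + ∑ i, (k i : ℝ) * Real.log (a i) := by
    rw [Real.log_mul (div_pos (hfactpos l) hB).ne' hC.ne',
      Real.log_div (hfactpos l).ne' hB.ne',
      Real.log_prod (fun i _ => (hfactpos (k i)).ne'),
      Real.log_prod (fun i _ => (pow_pos (ha i) (k i)).ne')]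
    simp only [Real.log_pow]
    try push_cast
    try ring
  have hki : ∀ i, (k i : ℝ) * Real.log ((k i : ℝ)/L)
      = (k i:ℝ)*Real.log (k i) - (k i:ℝ)*Real.log L := by
    intro i
    rcases Nat.eq_zero_or_pos (k i) with h|h
    · simp [h]
    · rw [Real.log_div (by exact_mod_cast h.ne') hL.ne']; ring
  have h1 : ∑ i, ((k i:ℝ)/L) * Real.log ((k i:ℝ)/L)
      = (1/L) * (∑ i, (k i:ℝ)*Real.log (k i) - L * Real.log L) := by
    calc ∑ i, ((k i:ℝ)/L) * Real.log ((k i:ℝ)/L)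
        = ∑ i, (1/L) * ((k i:ℝ)*Real.log (k i) - (k i:ℝ)*Real.log L) :=
          Finset.sum_congr rfl (fun i _ => by
            rw [show ((k i:ℝ)/L) * Real.log ((k i:ℝ)/L)
              = (1/L)*((k i:ℝ) * Real.log ((k i:ℝ)/L)) by ring, hki i])
      _ = (1/L) * (∑ i, (k i:ℝ)*Real.log (k i) - (∑ i, (k i:ℝ)) * Real.log L) := by
          rw [← Finset.mul_sum, Finset.sum_sub_distrib, ← Finset.sum_mul]
      _ = (1/L) * (∑ i, (k i:ℝ)*Real.log (k i) - L * Real.log L) := by rw [hsumk]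
  have h2 : ∑ i, ((k i:ℝ)/L) * Real.log (a i) = (1/L) * ∑ i, (k i:ℝ) * Real.log (a i) := by
    rw [Finset.mul_sum]
    exact Finset.sum_congr rfl fun i _ => by ring
  have hfl : Real.log (Nat.factorial l) = fAux l + L * Real.log L - L := by
    unfold fAux; rw [hLdef]; ring
  have hsplit2 : ∑ i, Real.log ((Nat.factorial (k i) : ℝ))
      = (∑ i, fAux (k i)) + (∑ i, (k i:ℝ)*Real.log (k i)) - L := by
    have h : ∑ i, Real.log ((Nat.factorial (k i)) : ℝ)
        = ∑ i, (fAux (k i) + ((k i:ℝ)*Real.log (k i) - (k i:ℝ))) :=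
      Finset.sum_congr rfl fun i _ => by unfold fAux; ring
    rw [h, Finset.sum_add_distrib, Finset.sum_sub_distrib, hsumk]
    ring
  have hmain : (1 / L) * Real.log (((Nat.factorial l : ℝ) / ∏ i, (Nat.factorial (k i) : ℝ)) *
          ∏ i, a i ^ (k i)) - charFn a (fun i => (k i : ℝ) / L)
      = (1/L) * (fAux l - ∑ i, fAux (k i)) := by
    simp only [charFn]
    rw [hlogsplit, h1, h2, hfl, hsplit2]
    ring
  rw [hmain, abs_mul, abs_of_pos (by positivity : (0:ℝ) < 1/L)]
  apply mul_le_mul_of_nonneg_left _ (by positivity)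
  -- |fAux l - ∑ fAux (k i)| ≤ C
  have hlogL : (0:ℝ) ≤ Real.log L := Real.log_nonneg (by rw [hLdef]; exact_mod_cast hl)
  have hn : (0:ℝ) ≤ (n:ℝ) := Nat.cast_nonneg n
  have hub : fAux l ≤ 1/2 * Real.log L + 1 := fAux_le l l le_rfl hl
  have hfl0 : 0 ≤ fAux l := fAux_nonneg l
  have hS0 : 0 ≤ ∑ i, fAux (k i) := Finset.sum_nonneg fun i _ => fAux_nonneg (k i)
  have hkle : ∀ i, k i ≤ l := fun i => hk ▸ Finset.single_le_sum
    (fun j (_ : j ∈ Finset.univ) => Nat.zero_le (k j)) (Finset.mem_univ i)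
  have hSub : ∑ i, fAux (k i) ≤ ((n:ℝ)+1) * (1/2 * Real.log L + 1) := by
    calc ∑ i, fAux (k i) ≤ ∑ _i : Fin (n+1), (1/2 * Real.log L + 1) :=
          Finset.sum_le_sum fun i _ => fAux_le (k i) l (hkle i) hl
      _ = ((n:ℝ)+1) * (1/2 * Real.log L + 1) := by
          rw [Finset.sum_const, Finset.card_univ, Fintype.card_fin]
          push_cast; ring
  have hprod : ((n:ℝ)+2) * 1 ≤ ((n:ℝ)+2) * (Real.log (Real.sqrt (2 * π)) + 1/12) :=
    mul_le_mul_of_nonneg_left one_le_log_sqrt_two_pi (by linarith)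
  rw [abs_le]
  constructor
  · nlinarith [mul_nonneg hn hlogL]
  · nlinarith [mul_nonneg hn hlogL]
end

section
/- Let Θ be a compact convex subset of ℝ^n with vol(Θ) > 0. For each integer l ≥ 1 let A_l = (a_{e,e'})_{e,e' ∈ lΘ ∩ ℤ^n} be a positive definite symmetric real matrix indexed by lΘ ∩ ℤ^n which is diagonal with all diagonal entries at most 1 (i.e., a_{e,e'} = 0 for e ≠ e' and 0 < a_{e,e} ≤ 1), and let K_l = { (x_e) ∈ ℝ^{lΘ ∩ ℤ^n} : Σ_{e ∈ lΘ ∩ ℤ^n} a_{e,e} x_e² ≤ 1 }. Suppose there are positive constants C, D and a continuous function φ : Θ → ℝ such that | log(1/a_{e,e}) − l·φ(e/l) | ≤ C·log l + D for all l ≥ 1 and all e ∈ lΘ ∩ ℤ^n. Then lim_{l→∞} log #(K_l ∩ ℤ^{lΘ ∩ ℤ^n}) / l^{n+1} = (1/2) ∫_Θ φ(x) dx. -/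
open Filter MeasureTheory Metric Bornology

namespace Lem22


variable {n : ℕ}

noncomputable def cl (l : ℕ) (x : Fin n → ℝ) : Fin n → ℝ :=
  fun i => (⌈(l : ℝ) * x i⌉ : ℝ) / l

lemma cl_bounds {l : ℕ} (hl : 1 ≤ l) (x : Fin n → ℝ) (i : Fin n) :
    x i ≤ cl l x i ∧ cl l x i ≤ x i + 1 / l := by
  have hl0 : (0:ℝ) < l := by exact_mod_cast hl
  have h1 := Int.le_ceil ((l:ℝ) * x i)
  have h2 := Int.ceil_lt_add_one ((l:ℝ) * x i)
  unfold cl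
  constructor
  · rw [le_div_iff₀ hl0]; nlinarith
  · rw [div_le_iff₀ hl0]
    have h3 : (1/(l:ℝ)) * l = 1 := by field_simp
    nlinarith

lemma cl_tendsto (x : Fin n → ℝ) :
    Tendsto (fun l : ℕ => cl (l + 1) x) atTop (nhds x) := by
  rw [tendsto_pi_nhds]
  intro i
  have h1 : Tendsto (fun l : ℕ => x i + 1 / ((l:ℝ)+1)) atTop (nhds (x i)) := by
    simpa using (tendsto_const_nhds : Tendsto (fun _ : ℕ => x i) atTop (nhds (x i))).add tendsto_one_div_add_atTop_nhds_zero_nat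
  refine tendsto_of_tendsto_of_tendsto_of_le_of_le tendsto_const_nhds h1 ?_ ?_
  · intro l; exact (cl_bounds (by omega) x i).1
  · intro l
    have := (cl_bounds (l := l + 1) (by omega) x i).2
    simpa using this

lemma riemann (n : ℕ) (Θ : Set (Fin n → ℝ)) (hΘc : IsCompact Θ) (hΘconv : Convex ℝ Θ)
    (S : ℕ → Finset (Fin n → ℤ))
    (hS : ∀ l : ℕ, 1 ≤ l → ∀ e : Fin n → ℤ,
      e ∈ S l ↔ (fun i => (e i : ℝ) / (l : ℝ)) ∈ Θ)
    (φ : (Fin n → ℝ) → ℝ) (hφ : ContinuousOn φ Θ) :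
    Tendsto (fun l : ℕ => (∑ e ∈ S l, φ (fun i => (e i : ℝ) / (l:ℝ))) / (l:ℝ)^n)
      atTop (nhds (∫ x in Θ, φ x)) := by
  have hclosed : IsClosed Θ := hΘc.isClosed
  have hmeas : MeasurableSet Θ := hclosed.measurableSet
  -- Tietze extension
  obtain ⟨ψ, hψ⟩ := ContinuousMap.exists_restrict_eq (Y := ℝ) hclosed
    ⟨Θ.restrict φ, hφ.restrict⟩
  have hψΘ : ∀ y ∈ Θ, ψ y = φ y := by
    intro y hy
    have := DFunLike.congr_fun hψ ⟨y, hy⟩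
    exact this
  set f : (Fin n → ℝ) → ℝ := Θ.indicator ψ with hf
  have hint_eq : ∫ x in Θ, φ x = ∫ x, f x := by
    rw [hf, integral_indicator hmeas]
    exact setIntegral_congr_fun hmeas (fun y hy => (hψΘ y hy).symm)
  rw [hint_eq]
  -- bound
  obtain ⟨M, hM⟩ := hΘc.exists_bound_of_continuousOn ψ.continuous.continuousOn
  obtain ⟨R, hR⟩ := hΘc.isBounded.subset_closedBall 0
  set R₀ : ℝ := |R| + 1 with hR₀
  have hΘball : Θ ⊆ closedBall 0 R₀ := hR.trans
    (closedBall_subset_closedBall (by rw [hR₀]; cases abs_cases R <;> linarith))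
  set M₀ : ℝ := max M 0 with hM₀
  have hfM : ∀ y, ‖f y‖ ≤ M₀ := by
    intro y
    rw [hf]
    by_cases hy : y ∈ Θ
    · rw [Set.indicator_of_mem hy]
      exact le_max_of_le_left (hM y hy)
    · rw [Set.indicator_of_notMem hy]; simp [hM₀]
  have hf_zero : ∀ y, y ∉ Θ → f y = 0 := fun y hy => Set.indicator_of_notMem hy _
  -- measurability
  have hfm : Measurable f := ψ.continuous.measurable.indicator hmeas
  have hclm : ∀ l : ℕ, Measurable (cl (n := n) l) := by
    intro l
    apply measurable_pi_lambda
    intro i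
    have h1 : Measurable fun x : Fin n → ℝ => (l:ℝ) * x i :=
      (measurable_pi_apply i).const_mul _
    exact (measurable_from_top.comp h1.ceil).div_const _
  -- domination
  set bd : (Fin n → ℝ) → ℝ := (closedBall (0 : Fin n → ℝ) (R₀ + 1)).indicator
    (fun _ => M₀) with hbd
  have hbd_int : Integrable bd := by
    rw [hbd]
    exact (integrableOn_const measure_closedBall_lt_top.ne).integrable_indicator
      measurableSet_closedBall
  have h_bound : ∀ k : ℕ, ∀ᵐ x : Fin n → ℝ, ‖f (cl (k+1) x)‖ ≤ bd x := by
    intro k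
    refine Eventually.of_forall (fun x => ?_)
    by_cases hx : cl (k+1) x ∈ Θ
    · have hxball : x ∈ closedBall (0 : Fin n → ℝ) (R₀ + 1) := by
        have h1 : cl (k+1) x ∈ closedBall (0 : Fin n → ℝ) R₀ := hΘball hx
        rw [mem_closedBall, dist_zero_right] at h1 ⊢
        have h2 : ‖x - cl (k+1) x‖ ≤ 1 := by
          rw [pi_norm_le_iff_of_nonneg (by norm_num)]
          intro i
          have hb := cl_bounds (l := k+1) (by omega) x i
          have hk : (0:ℝ) < ((k:ℝ)+1) := by positivity
          have hk1 : 1 / ((k+1:ℕ):ℝ) ≤ 1 := by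
            rw [div_le_one (by positivity)]; exact_mod_cast Nat.one_le_iff_ne_zero.mpr (by omega)
          simp only [Pi.sub_apply, Real.norm_eq_abs]
          rw [abs_le]
          constructor <;> nlinarith [hb.1, hb.2]
        calc ‖x‖ = ‖(x - cl (k+1) x) + cl (k+1) x‖ := by ring_nf
          _ ≤ ‖x - cl (k+1) x‖ + ‖cl (k+1) x‖ := norm_add_le _ _
          _ ≤ 1 + R₀ := add_le_add h2 h1
          _ = R₀ + 1 := by ring
      rw [hbd, Set.indicator_of_mem hxball]
      exact hfM _
    · rw [hf_zero _ hx, norm_zero, hbd]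
      apply Set.indicator_nonneg
      intro y _
      simp [hM₀]
  -- a.e. convergence
  have h_ae : ∀ᵐ x : Fin n → ℝ, Tendsto (fun k : ℕ => f (cl (k+1) x)) atTop (nhds (f x)) := by
    have h0 : volume (frontier Θ) = 0 := hΘconv.addHaar_frontier volume
    rw [← compl_mem_ae_iff] at h0
    filter_upwards [h0] with x hx
    by_cases hxi : x ∈ interior Θ
    · have hev : ∀ᶠ k : ℕ in atTop, cl (k+1) x ∈ interior Θ :=
        (cl_tendsto x).eventually (isOpen_interior.eventually_mem hxi)
      have h1 : Tendsto (fun k : ℕ => ψ (cl (k+1) x)) atTop (nhds (ψ x)) :=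
        (ψ.continuous.tendsto x).comp (cl_tendsto x)
      have h2 : f x = ψ x := Set.indicator_of_mem (interior_subset hxi) _
      rw [h2]
      refine h1.congr' ?_
      filter_upwards [hev] with k hk
      exact (Set.indicator_of_mem (interior_subset hk) _).symm
    · have hxc : x ∉ Θ := by
        intro hxΘ
        exact hx ⟨subset_closure hxΘ, hxi⟩
      have hev : ∀ᶠ k : ℕ in atTop, cl (k+1) x ∉ Θ :=
        (cl_tendsto x).eventually (hclosed.isOpen_compl.eventually_mem hxc)
      rw [hf_zero _ hxc]
      refine tendsto_const_nhds.congr' ?_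
      filter_upwards [hev] with k hk
      exact (hf_zero _ hk).symm
  have hDCT : Tendsto (fun k : ℕ => ∫ x, f (cl (k+1) x)) atTop (nhds (∫ x, f x)) := by
    refine tendsto_integral_of_dominated_convergence bd
      (fun k => ((hfm.comp (hclm (k+1))).aestronglyMeasurable)) hbd_int h_bound h_ae
  -- identify the integral with the Riemann sum
  have hkey : ∀ l : ℕ, 1 ≤ l →
      ∫ x, f (cl l x) = (∑ e ∈ S l, φ (fun i => (e i : ℝ) / (l:ℝ))) / (l:ℝ)^n := by
    intro l hl
    have hl0 : (0:ℝ) < l := by exact_mod_cast hl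
    set cube : (Fin n → ℤ) → Set (Fin n → ℝ) := fun e =>
      Set.univ.pi fun i => Set.Ioc (((e i : ℝ) - 1)/l) ((e i : ℝ)/l) with hcube
    have hmem : ∀ (e : Fin n → ℤ) (x : Fin n → ℝ),
        x ∈ cube e ↔ ∀ i, ⌈(l:ℝ) * x i⌉ = e i := by
      intro e x
      rw [hcube]
      simp only [Set.mem_pi, Set.mem_univ, forall_true_left, Set.mem_Ioc]
      apply forall_congr'
      intro i
      rw [Int.ceil_eq_iff, div_lt_iff₀ hl0, le_div_iff₀ hl0]
      constructor
      · rintro ⟨h1, h2⟩; constructor <;> nlinarith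
      · rintro ⟨h1, h2⟩; constructor <;> nlinarith
    have hcube_meas : ∀ e, MeasurableSet (cube e) := by
      intro e
      exact MeasurableSet.univ_pi fun i => measurableSet_Ioc
    have hcube_vol : ∀ e, volume (cube e) = ENNReal.ofReal (1/(l:ℝ)) ^ n := by
      intro e
      rw [hcube]
      rw [volume_pi_pi]
      have : ∀ i : Fin n, volume (Set.Ioc (((e i : ℝ) - 1)/l) ((e i : ℝ)/l))
          = ENNReal.ofReal (1/(l:ℝ)) := by
        intro i
        rw [Real.volume_Ioc]
        congr 1
        field_simp; ring
      simp [this]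
    have hgsum : (fun x => f (cl l x)) = fun x => ∑ e ∈ S l,
        (cube e).indicator (fun _ => φ (fun i => (e i : ℝ) / (l:ℝ))) x := by
      funext x
      set e₀ : Fin n → ℤ := fun i => ⌈(l:ℝ) * x i⌉ with he₀
      have hcl : cl l x = fun i => ((e₀ i : ℝ) / l) := rfl
      have hx_mem : ∀ e, x ∈ cube e ↔ e = e₀ := by
        intro e
        rw [hmem]
        constructor
        · intro h; funext i; exact (h i).symm
        · intro h i; rw [h]
      by_cases h1 : e₀ ∈ S l
      · have hxΘ : cl l x ∈ Θ := by rw [hcl]; exact (hS l hl e₀).1 h1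
        rw [hf, Set.indicator_of_mem hxΘ, hψΘ _ hxΘ, hcl]
        rw [Finset.sum_eq_single_of_mem e₀ h1]
        · rw [Set.indicator_of_mem ((hx_mem e₀).mpr rfl)]
        · intro e he hne
          rw [Set.indicator_of_notMem]
          rw [hx_mem]; exact hne
      · have hxΘ : cl l x ∉ Θ := by rw [hcl]; intro h; exact h1 ((hS l hl e₀).2 h)
        rw [hf_zero _ hxΘ]
        rw [Finset.sum_eq_zero]
        intro e he
        rw [Set.indicator_of_notMem]
        rw [hx_mem]
        rintro rfl
        exact h1 he
    rw [hgsum]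
    rw [integral_finset_sum]
    · have : ∀ e ∈ S l, ∫ x, (cube e).indicator
          (fun _ => φ (fun i => (e i : ℝ) / (l:ℝ))) x
          = (1/(l:ℝ))^n * φ (fun i => (e i : ℝ) / (l:ℝ)) := by
        intro e _
        rw [integral_indicator_const _ (hcube_meas e), measureReal_def, hcube_vol e]
        rw [ENNReal.toReal_pow, ENNReal.toReal_ofReal (by positivity)]
        simp [smul_eq_mul]
      rw [Finset.sum_congr rfl this, ← Finset.mul_sum]
      rw [div_eq_mul_inv, mul_comm]
      congr 1
      simp [inv_pow]
    · intro e _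
      rw [integrable_indicator_iff (hcube_meas e)]
      apply (integrableOn_const_iff).mpr
      right
      rw [hcube_vol e]
      exact ENNReal.pow_lt_top ENNReal.ofReal_lt_top
  have hfinal : Tendsto (fun k : ℕ =>
      (∑ e ∈ S (k+1), φ (fun i => (e i : ℝ) / ((k+1:ℕ):ℝ))) / ((k+1:ℕ):ℝ)^n)
      atTop (nhds (∫ x, f x)) := by
    refine hDCT.congr (fun k => ?_)
    exact hkey (k+1) (by omega)
  exact (tendsto_add_atTop_iff_nat 1).mp hfinal





def P (S : Finset (Fin n → ℤ)) (a : (Fin n → ℤ) → ℝ) : Set ((Fin n → ℤ) → ℤ) :=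
  {x | (∀ e ∉ S, x e = 0) ∧ ∑ e ∈ S, a e * ((x e : ℝ)) ^ 2 ≤ 1}

noncomputable def bb (a : (Fin n → ℤ) → ℝ) (e : Fin n → ℤ) : ℕ :=
  ⌊(Real.sqrt (a e))⁻¹⌋₊

noncomputable def cc (S : Finset (Fin n → ℤ)) (a : (Fin n → ℤ) → ℝ) (e : Fin n → ℤ) : ℕ :=
  ⌊(Real.sqrt (S.card * a e))⁻¹⌋₊

lemma icc_card (b : ℕ) : (Finset.Icc (-(b:ℤ)) (b:ℤ)).card = 2 * b + 1 := by
  rw [Int.card_Icc]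
  omega

lemma nat_card_pi_icc (S : Finset (Fin n → ℤ)) (t : (Fin n → ℤ) → ℕ) :
    Nat.card ((e : {e // e ∈ S}) → (Finset.Icc (-(t e.1 : ℤ)) (t e.1 : ℤ))) =
      ∏ e ∈ S, (2 * t e + 1) := by
  rw [Nat.card_pi]
  rw [← Finset.prod_coe_sort S (fun e => 2 * t e + 1)]
  congr 1
  funext e
  rw [Nat.card_eq_fintype_card, Fintype.card_coe, icc_card]

lemma upper_inj (S : Finset (Fin n → ℤ)) (a : (Fin n → ℤ) → ℝ)
    (ha : ∀ e ∈ S, 0 < a e) :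
    ∃ F : (P S a) → ((e : {e // e ∈ S}) → (Finset.Icc (-(bb a e.1 : ℤ)) (bb a e.1 : ℤ))),
      Function.Injective F := by
  have hmem : ∀ (x : (Fin n → ℤ) → ℤ), x ∈ P S a → ∀ e (he : e ∈ S),
      x e ∈ Finset.Icc (-(bb a e : ℤ)) (bb a e : ℤ) := by
    intro x hx e he
    obtain ⟨hx1, hx2⟩ := hx
    have hae := ha e he
    have h1 : a e * ((x e : ℝ)) ^ 2 ≤ 1 := by
      refine le_trans ?_ hx2
      exact Finset.single_le_sum (f := fun e' => a e' * ((x e' : ℝ)) ^ 2)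
        (fun e' he' => mul_nonneg (ha e' he').le (sq_nonneg _)) he
    have h2 : ((x e : ℝ)) ^ 2 ≤ (a e)⁻¹ := by
      rw [← mul_le_mul_iff_of_pos_left hae]
      calc a e * (x e : ℝ)^2 ≤ 1 := h1
        _ = a e * (a e)⁻¹ := by field_simp
    have h3 : |((x e : ℝ))| ≤ (Real.sqrt (a e))⁻¹ := by
      have := Real.sqrt_le_sqrt h2
      rwa [Real.sqrt_sq_eq_abs, Real.sqrt_inv] at this
    have h4 : (x e).natAbs ≤ bb a e := by
      apply Nat.le_floor
      rw [Nat.cast_natAbs]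
      push_cast
      exact h3
    rw [Finset.mem_Icc]
    omega
  refine ⟨fun x e => ⟨x.1 e.1, hmem x.1 x.2 e.1 e.2⟩, ?_⟩
  intro x y h
  apply Subtype.ext
  funext e
  by_cases he : e ∈ S
  · exact congrArg Subtype.val (congrFun h ⟨e, he⟩)
  · rw [x.2.1 e he, y.2.1 e he]

lemma P_finite (S : Finset (Fin n → ℤ)) (a : (Fin n → ℤ) → ℝ)
    (ha : ∀ e ∈ S, 0 < a e) : Finite (P S a) := by
  obtain ⟨F, hF⟩ := upper_inj S a ha
  exact Finite.of_injective F hF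

lemma card_upper (S : Finset (Fin n → ℤ)) (a : (Fin n → ℤ) → ℝ)
    (ha : ∀ e ∈ S, 0 < a e) :
    Nat.card (P S a) ≤ ∏ e ∈ S, (2 * bb a e + 1) := by
  obtain ⟨F, hF⟩ := upper_inj S a ha
  have := Nat.card_le_card_of_injective F hF
  rwa [nat_card_pi_icc] at this

lemma card_lower (S : Finset (Fin n → ℤ)) (a : (Fin n → ℤ) → ℝ)
    (ha : ∀ e ∈ S, 0 < a e) :
    ∏ e ∈ S, (2 * cc S a e + 1) ≤ Nat.card (P S a) := by
  haveI := P_finite S a ha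
  set G : ((e : {e // e ∈ S}) → (Finset.Icc (-(cc S a e.1 : ℤ)) (cc S a e.1 : ℤ))) →
      ((Fin n → ℤ) → ℤ) :=
    fun f e => if h : e ∈ S then (f ⟨e, h⟩ : ℤ) else 0 with hG
  have hGP : ∀ f, G f ∈ P S a := by
    intro f
    constructor
    · intro e he
      simp only [hG, dif_neg he]
    · have hterm : ∀ e ∈ S, a e * ((G f e : ℝ)) ^ 2 ≤ ((S.card : ℝ))⁻¹ := by
        intro e he
        have hae := ha e he
        have hN : (1 : ℝ) ≤ S.card := by
          exact_mod_cast Finset.card_pos.mpr ⟨e, he⟩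
        have hNa : (0:ℝ) < (S.card : ℝ) * a e := by positivity
        have hfe : |(G f e : ℝ)| ≤ (cc S a e : ℝ) := by
          have h1 := (f ⟨e, he⟩).2
          rw [Finset.mem_Icc] at h1
          have h2 : G f e = (f ⟨e, he⟩ : ℤ) := dif_pos he
          rw [h2]
          have h5 : |(f ⟨e, he⟩ : ℤ)| ≤ (cc S a e : ℤ) := abs_le.mpr h1
          exact_mod_cast h5
        have hcle : (cc S a e : ℝ) ≤ (Real.sqrt (S.card * a e))⁻¹ :=
          Nat.floor_le (by positivity)
        have h3 : ((G f e : ℝ)) ^ 2 ≤ ((Real.sqrt (S.card * a e))⁻¹) ^ 2 := by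
          rw [← sq_abs]
          apply pow_le_pow_left₀ (abs_nonneg _)
          exact hfe.trans hcle
        have h4 : ((Real.sqrt (S.card * a e))⁻¹) ^ 2 = ((S.card : ℝ) * a e)⁻¹ := by
          rw [inv_pow, Real.sq_sqrt hNa.le]
        have h5 : a e * ((S.card : ℝ) * a e)⁻¹ = ((S.card : ℝ))⁻¹ := by
          rw [mul_inv, mul_comm ((S.card : ℝ))⁻¹, ← mul_assoc,
            mul_inv_cancel₀ hae.ne', one_mul]
        calc a e * ((G f e : ℝ)) ^ 2 ≤ a e * ((S.card : ℝ) * a e)⁻¹ := by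
              rw [← h4]; exact mul_le_mul_of_nonneg_left h3 hae.le
          _ = ((S.card : ℝ))⁻¹ := h5
      calc ∑ e ∈ S, a e * ((G f e : ℝ)) ^ 2 ≤ ∑ _e ∈ S, ((S.card : ℝ))⁻¹ :=
            Finset.sum_le_sum hterm
        _ = S.card * ((S.card : ℝ))⁻¹ := by rw [Finset.sum_const, nsmul_eq_mul]
        _ ≤ 1 := mul_inv_le_one
  have hGinj : Function.Injective (fun f => (⟨G f, hGP f⟩ : P S a)) := by
    intro f g h
    funext e
    apply Subtype.ext
    have h1 := congrFun (congrArg Subtype.val h) e.1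
    simpa only [hG, dif_pos e.2] using h1
  have := Nat.card_le_card_of_injective _ hGinj
  rwa [nat_card_pi_icc] at this


end Lem22

set_option maxHeartbeats 1000000 in
/-- Lemma 2.2 (second assertion): in the diagonal case with diagonal entries in
`(0, 1]`, the limit of the counting function of lattice points in `K_l` exists
and equals `(1/2)∫_Θ φ`.  Here `S l` is the finite set of lattice points
`e ∈ ℤ^n` with `e/l ∈ Θ` (i.e. `e ∈ lΘ`), `a l e` is the diagonal entry
`a_{e,e}` of `A_l`, tuples indexed by `lΘ ∩ ℤ^n` are modelled as functions
`(Fin n → ℤ) → ℤ` vanishing outside `S l`, and `Nat.card` counts lattice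
points of `K_l`. -/
theorem tendsto_count_lattice_points_diagonal (n : ℕ) (Θ : Set (Fin n → ℝ))
    (hΘc : IsCompact Θ) (hΘconv : Convex ℝ Θ)
    (hΘvol : 0 < MeasureTheory.volume Θ)
    (S : ℕ → Finset (Fin n → ℤ))
    (hS : ∀ l : ℕ, 1 ≤ l → ∀ e : Fin n → ℤ,
      e ∈ S l ↔ (fun i => (e i : ℝ) / (l : ℝ)) ∈ Θ)
    (a : ℕ → (Fin n → ℤ) → ℝ)
    (hdiag : ∀ l : ℕ, 1 ≤ l → ∀ e ∈ S l, 0 < a l e ∧ a l e ≤ 1)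
    (C D : ℝ) (hC : 0 < C) (hD : 0 < D)
    (φ : (Fin n → ℝ) → ℝ) (hφ : ContinuousOn φ Θ)
    (hest : ∀ l : ℕ, 1 ≤ l → ∀ e ∈ S l,
      |Real.log (1 / a l e) - (l : ℝ) * φ (fun i => (e i : ℝ) / (l : ℝ))| ≤
        C * Real.log l + D) :
    Filter.Tendsto (fun l : ℕ =>
        Real.log (Nat.card ↥{x : (Fin n → ℤ) → ℤ |
            (∀ e ∉ S l, x e = 0) ∧
            ∑ e ∈ S l, a l e * ((x e : ℝ)) ^ 2 ≤ 1}) /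
          (l : ℝ) ^ (n + 1)) Filter.atTop
      (nhds ((1 / 2) * ∫ x in Θ, φ x)) := by
  classical
  -- constants
  obtain ⟨R, hR⟩ := hΘc.isBounded.subset_closedBall 0
  set R₀ : ℝ := |R| + 1 with hR₀def
  have hR₀1 : 1 ≤ R₀ := by have := abs_nonneg R; rw [hR₀def]; linarith
  have hΘball : Θ ⊆ closedBall 0 R₀ := hR.trans
    (closedBall_subset_closedBall (by cases abs_cases R <;> rw [hR₀def] <;> linarith))
  set K : ℝ := (2 * R₀ + 1) ^ n with hKdef
  have hK1 : 1 ≤ K := by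
    rw [hKdef]
    calc (1:ℝ) = 1 ^ n := (one_pow n).symm
      _ ≤ (2 * R₀ + 1) ^ n := pow_le_pow_left₀ (by norm_num) (by linarith) n
  have hK0 : 0 < K := lt_of_lt_of_le one_pos hK1
  -- cardinality bound for S l
  have hNle : ∀ l : ℕ, 1 ≤ l → ((S l).card : ℝ) ≤ K * (l : ℝ) ^ n := by
    intro l hl
    have hl0 : (0:ℝ) < l := by exact_mod_cast hl
    have hl1 : (1:ℝ) ≤ l := by exact_mod_cast hl
    set B : ℤ := ⌊R₀ * l⌋ with hBdef
    have hB0 : 0 ≤ B := Int.le_floor.mpr (by push_cast; nlinarith)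
    have hsub : S l ⊆ Fintype.piFinset (fun _ : Fin n => Finset.Icc (-B) B) := by
      intro e he
      rw [Fintype.mem_piFinset]
      intro i
      have hy : (fun i => (e i : ℝ) / (l : ℝ)) ∈ Θ := (hS l hl e).1 he
      have h1 : |(e i : ℝ)| / (l : ℝ) ≤ R₀ := by
        have h0 := hΘball hy
        rw [mem_closedBall, dist_zero_right] at h0
        have h0' := norm_le_pi_norm (fun i => (e i : ℝ) / (l : ℝ)) i
        simp only [Real.norm_eq_abs] at h0'
        have h0'' : |(e i : ℝ) / (l : ℝ)| ≤ R₀ := le_trans h0' h0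
        rwa [abs_div, abs_of_pos hl0] at h0''
      rw [div_le_iff₀ hl0] at h1
      have hA : e i ≤ B := by
        rw [hBdef, Int.le_floor]
        calc ((e i : ℤ) : ℝ) ≤ |(e i : ℝ)| := le_abs_self _
          _ ≤ R₀ * l := h1
      have hB' : -(e i) ≤ B := by
        rw [hBdef, Int.le_floor]
        calc ((-(e i) : ℤ) : ℝ) = -((e i : ℤ) : ℝ) := by push_cast; ring
          _ ≤ |(e i : ℝ)| := neg_le_abs _
          _ ≤ R₀ * l := h1
      rw [Finset.mem_Icc]
      omega
    have hcard : (S l).card ≤ ((2 * B + 1).toNat) ^ n := by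
      refine le_trans (Finset.card_le_card hsub) ?_
      rw [Fintype.card_piFinset]
      have hc : ∏ _i : Fin n, (Finset.Icc (-B) B).card = (2 * B + 1).toNat ^ n := by
        rw [Finset.prod_const, Finset.card_univ, Fintype.card_fin]
        congr 1
        rw [Int.card_Icc]; omega
      exact le_of_eq hc
    calc ((S l).card : ℝ) ≤ (((2 * B + 1).toNat : ℝ)) ^ n := by
          exact_mod_cast hcard
      _ ≤ ((2 * R₀ + 1) * l) ^ n := by
          apply pow_le_pow_left₀ (by positivity)
          have h3 : ((2 * B + 1).toNat : ℝ) = 2 * (B:ℝ) + 1 := by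
            have h3' : ((2 * B + 1).toNat : ℤ) = 2 * B + 1 := Int.toNat_of_nonneg (by omega)
            exact_mod_cast h3'
          rw [h3]
          have h4 : (B : ℝ) ≤ R₀ * l := Int.floor_le _
          nlinarith
      _ = K * (l : ℝ) ^ n := by rw [hKdef, mul_pow]
  -- Riemann sums
  have hRiem := Lem22.riemann n Θ hΘc hΘconv S hS φ hφ
  set Rl : ℕ → ℝ := fun l => (∑ e ∈ S l, φ (fun i => (e i : ℝ) / (l:ℝ))) / (l:ℝ)^n
    with hRldef
  set F : ℕ → ℝ := fun l =>
    Real.log (Nat.card (Lem22.P (S l) (a l))) / (l : ℝ) ^ (n + 1) with hFdef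
  set E : ℕ → ℝ := fun l => K * (Real.log 3 + (1/2) * (Real.log K + n * Real.log l)
    + (1/2) * (C * Real.log l + D)) / l with hEdef
  have key : ∀ l : ℕ, 1 ≤ l → |F l - Rl l / 2| ≤ E l := by
    intro l hl
    have hl0 : (0:ℝ) < l := by exact_mod_cast hl
    have hl1 : (1:ℝ) ≤ l := by exact_mod_cast hl
    have hlogl : 0 ≤ Real.log l := Real.log_natCast_nonneg l
    have ha' : ∀ e ∈ S l, 0 < a l e := fun e he => (hdiag l hl e he).1
    set N : ℕ := (S l).card with hNdef
    set Pl : ℕ := Nat.card (Lem22.P (S l) (a l)) with hPldef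
    -- positivity of Pl
    have hProdc : 1 ≤ ∏ e ∈ S l, (2 * Lem22.cc (S l) (a l) e + 1) :=
      Nat.one_le_iff_ne_zero.mpr (Finset.prod_ne_zero_iff.mpr (fun e _ => by omega))
    have hPl1 : 1 ≤ Pl := le_trans hProdc (Lem22.card_lower (S l) (a l) ha')
    -- upper bound on log Pl
    have hup : Real.log Pl ≤ N * Real.log 3
        + ∑ e ∈ S l, (1/2) * Real.log (1 / a l e) := by
      have h1 : (Pl : ℝ) ≤ ((∏ e ∈ S l, (2 * Lem22.bb (a l) e + 1) : ℕ) : ℝ) := by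
        exact_mod_cast Lem22.card_upper (S l) (a l) ha'
      have h2 : Real.log Pl ≤ Real.log ((∏ e ∈ S l, (2 * Lem22.bb (a l) e + 1) : ℕ)) :=
        Real.log_le_log (by exact_mod_cast hPl1) h1
      refine h2.trans ?_
      rw [Nat.cast_prod, Real.log_prod (fun e _ => by positivity)]
      have h3 : ∀ e ∈ S l, Real.log ((2 * Lem22.bb (a l) e + 1 : ℕ) : ℝ)
          ≤ Real.log 3 + (1/2) * Real.log (1 / a l e) := by
        intro e he
        have hae := ha' e he
        have ha1 := (hdiag l hl e he).2
        have hsq : 0 < Real.sqrt (a l e) := Real.sqrt_pos.mpr hae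
        have hinv1 : 1 ≤ (Real.sqrt (a l e))⁻¹ :=
          (one_le_inv₀ hsq).mpr (Real.sqrt_le_one.mpr ha1)
        have hb : (Lem22.bb (a l) e : ℝ) ≤ (Real.sqrt (a l e))⁻¹ :=
          Nat.floor_le (by positivity)
        have h4 : ((2 * Lem22.bb (a l) e + 1 : ℕ) : ℝ) ≤ 3 * (Real.sqrt (a l e))⁻¹ := by
          push_cast; linarith
        refine (Real.log_le_log (by positivity) h4).trans (le_of_eq ?_)
        have hlog1a : Real.log (1 / a l e) = -Real.log (a l e) := by
          rw [one_div, Real.log_inv]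
        rw [Real.log_mul (by norm_num) (by positivity), Real.log_inv,
          Real.log_sqrt hae.le, hlog1a]
        ring
      calc ∑ e ∈ S l, Real.log ((2 * Lem22.bb (a l) e + 1 : ℕ) : ℝ)
          ≤ ∑ e ∈ S l, (Real.log 3 + (1/2) * Real.log (1 / a l e)) :=
            Finset.sum_le_sum h3
        _ = N * Real.log 3 + ∑ e ∈ S l, (1/2) * Real.log (1 / a l e) := by
            rw [Finset.sum_add_distrib, Finset.sum_const, nsmul_eq_mul]
    -- lower bound on log Pl
    have hlo : ∑ e ∈ S l, (1/2) * Real.log (1 / a l e) - (N : ℝ)/2 * Real.log N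
        ≤ Real.log Pl := by
      have h1 : ((∏ e ∈ S l, (2 * Lem22.cc (S l) (a l) e + 1) : ℕ) : ℝ) ≤ (Pl : ℝ) := by
        exact_mod_cast Lem22.card_lower (S l) (a l) ha'
      have h2 : Real.log ((∏ e ∈ S l, (2 * Lem22.cc (S l) (a l) e + 1) : ℕ))
          ≤ Real.log Pl :=
        Real.log_le_log (by exact_mod_cast hProdc) h1
      refine le_trans ?_ h2
      rw [Nat.cast_prod, Real.log_prod (fun e _ => by positivity)]
      have h3 : ∀ e ∈ S l, (1/2) * Real.log (1 / a l e) - (1/2) * Real.log N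
          ≤ Real.log ((2 * Lem22.cc (S l) (a l) e + 1 : ℕ) : ℝ) := by
        intro e he
        have hae := ha' e he
        have hN1 : (1:ℝ) ≤ N := by
          exact_mod_cast Finset.card_pos.mpr ⟨e, he⟩
        have hNa : (0:ℝ) < (N:ℝ) * a l e := by positivity
        set t : ℝ := (Real.sqrt ((N:ℝ) * a l e))⁻¹ with htdef
        have ht0 : 0 < t := by rw [htdef]; positivity
        have h4 : t < ((2 * Lem22.cc (S l) (a l) e + 1 : ℕ) : ℝ) := by
          have h5 := Nat.lt_floor_add_one t
          have h6 : (⌊t⌋₊ : ℝ) + 1 ≤ ((2 * Lem22.cc (S l) (a l) e + 1 : ℕ) : ℝ) := by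
            have hcc : Lem22.cc (S l) (a l) e = ⌊t⌋₊ := rfl
            rw [hcc]
            push_cast
            have : (0:ℝ) ≤ (⌊t⌋₊:ℝ) := by positivity
            linarith
          exact lt_of_lt_of_le h5 h6
        have h7 : Real.log t ≤ Real.log ((2 * Lem22.cc (S l) (a l) e + 1 : ℕ) : ℝ) :=
          Real.log_le_log ht0 h4.le
        refine le_trans (le_of_eq ?_) h7
        have hlog1a : Real.log (1 / a l e) = -Real.log (a l e) := by
          rw [one_div, Real.log_inv]
        rw [htdef, Real.log_inv, Real.log_sqrt hNa.le,
          Real.log_mul (by positivity) hae.ne', hlog1a]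
        ring
      calc ∑ e ∈ S l, (1/2) * Real.log (1 / a l e) - (N : ℝ)/2 * Real.log N
          = ∑ e ∈ S l, ((1/2) * Real.log (1 / a l e) - (1/2) * Real.log N) := by
            rw [Finset.sum_sub_distrib, Finset.sum_const, nsmul_eq_mul]
            ring
        _ ≤ ∑ e ∈ S l, Real.log ((2 * Lem22.cc (S l) (a l) e + 1 : ℕ) : ℝ) :=
            Finset.sum_le_sum h3
    -- comparison of T with the Riemann sum
    set T : ℝ := ∑ e ∈ S l, (1/2) * Real.log (1 / a l e) with hTdef
    set Sφ : ℝ := ∑ e ∈ S l, φ (fun i => (e i : ℝ) / (l:ℝ)) with hSφdef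
    have hTφ : |T - (l:ℝ)/2 * Sφ| ≤ (N:ℝ)/2 * (C * Real.log l + D) := by
      have h1 : T - (l:ℝ)/2 * Sφ = ∑ e ∈ S l,
          (1/2) * (Real.log (1 / a l e) - (l:ℝ) * φ (fun i => (e i : ℝ) / (l:ℝ))) := by
        rw [hTdef, hSφdef, Finset.mul_sum, ← Finset.sum_sub_distrib]
        congr 1; funext e; ring
      rw [h1]
      refine le_trans (Finset.abs_sum_le_sum_abs _ _) ?_
      have h2 : ∀ e ∈ S l, |(1/2) * (Real.log (1 / a l e)
          - (l:ℝ) * φ (fun i => (e i : ℝ) / (l:ℝ)))| ≤ (1/2) * (C * Real.log l + D) := by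
        intro e he
        rw [abs_mul, abs_of_pos (by norm_num : (0:ℝ) < 1/2)]
        exact mul_le_mul_of_nonneg_left (hest l hl e he) (by norm_num)
      refine le_trans (Finset.sum_le_sum h2) ?_
      rw [Finset.sum_const, nsmul_eq_mul, hNdef]
      ring_nf
      exact le_refl _
    -- log N bound
    have hlogN : Real.log N ≤ Real.log K + n * Real.log l := by
      rcases Nat.eq_zero_or_pos N with h | h
      · rw [h]
        simp only [Nat.cast_zero, Real.log_zero]
        have := Real.log_nonneg hK1
        positivity
      · have h1 : (N:ℝ) ≤ K * (l:ℝ)^n := hNle l hl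
        refine (Real.log_le_log (by exact_mod_cast h) h1).trans (le_of_eq ?_)
        rw [Real.log_mul hK0.ne' (by positivity), Real.log_pow, Real.log_pow]
    have hlogN0 : 0 ≤ Real.log N := Real.log_natCast_nonneg N
    -- combine
    set Q : ℝ := Real.log 3 + (1/2) * (Real.log K + n * Real.log l)
      + (1/2) * (C * Real.log l + D) with hQdef
    have hQ0 : 0 ≤ Q := by
      have h3 : (0:ℝ) ≤ Real.log 3 := Real.log_nonneg (by norm_num)
      have hKl : (0:ℝ) ≤ Real.log K := Real.log_nonneg hK1
      rw [hQdef]; positivity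
    have hcomb : |Real.log Pl - (l:ℝ)/2 * Sφ| ≤ K * (l:ℝ)^n * Q := by
      have hNK : (N:ℝ) ≤ K * (l:ℝ)^n := hNle l hl
      have hN0 : (0:ℝ) ≤ N := Nat.cast_nonneg N
      have hlog3 : (0:ℝ) ≤ Real.log 3 := Real.log_nonneg (by norm_num)
      have hCD : (0:ℝ) ≤ C * Real.log l + D := by positivity
      have habs1 : |Real.log Pl - T| ≤ (N:ℝ) * Real.log 3 + (N:ℝ)/2 * Real.log N := by
        have hNlog3 : (0:ℝ) ≤ (N:ℝ) * Real.log 3 := by positivity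
        have hNlogN : (0:ℝ) ≤ (N:ℝ)/2 * Real.log N := mul_nonneg (by positivity) hlogN0
        rw [abs_le]
        constructor
        · linarith [hlo]
        · linarith [hup]
      have htri : |Real.log Pl - (l:ℝ)/2 * Sφ| ≤ |Real.log Pl - T| + |T - (l:ℝ)/2 * Sφ| := by
        have := abs_sub_le (Real.log Pl) T ((l:ℝ)/2 * Sφ)
        exact this
      refine htri.trans ?_
      have h1 : (N:ℝ) * Real.log 3 ≤ K * (l:ℝ)^n * Real.log 3 :=
        mul_le_mul_of_nonneg_right hNK hlog3
      have h2 : (N:ℝ)/2 * Real.log N ≤ K * (l:ℝ)^n / 2 * (Real.log K + n * Real.log l) := by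
        have ha2 : (0:ℝ) ≤ Real.log K + n * Real.log l := hlogN0.trans hlogN
        have := mul_le_mul (by linarith : (N:ℝ)/2 ≤ K * (l:ℝ)^n / 2) hlogN hlogN0
          (by positivity)
        linarith
      have h3 : (N:ℝ)/2 * (C * Real.log l + D) ≤ K * (l:ℝ)^n / 2 * (C * Real.log l + D) :=
        mul_le_mul_of_nonneg_right (by linarith) hCD
      rw [hQdef]
      calc |Real.log Pl - T| + |T - (l:ℝ)/2 * Sφ|
          ≤ ((N:ℝ) * Real.log 3 + (N:ℝ)/2 * Real.log N) + (N:ℝ)/2 * (C * Real.log l + D) :=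
            add_le_add habs1 hTφ
        _ ≤ K * (l:ℝ)^n * Real.log 3 + K * (l:ℝ)^n / 2 * (Real.log K + n * Real.log l)
            + K * (l:ℝ)^n / 2 * (C * Real.log l + D) := by linarith
        _ = K * (l:ℝ)^n * (Real.log 3 + (1/2) * (Real.log K + n * Real.log l)
            + (1/2) * (C * Real.log l + D)) := by ring
    -- divide by l^(n+1)
    have hpow : (0:ℝ) < (l:ℝ)^(n+1) := by positivity
    have hdiff : F l - Rl l / 2 = (Real.log Pl - (l:ℝ)/2 * Sφ) / (l:ℝ)^(n+1) := by
      have e1 : F l = Real.log Pl / (l:ℝ)^(n+1) := rfl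
      have e2 : Rl l = Sφ / (l:ℝ)^n := rfl
      rw [e1, e2, pow_succ]
      field_simp
    rw [hdiff, abs_div, abs_of_pos hpow]
    rw [div_le_iff₀ hpow]
    calc |Real.log Pl - (l:ℝ)/2 * Sφ| ≤ K * (l:ℝ)^n * Q := hcomb
      _ = E l * (l:ℝ)^(n+1) := by
          have e1 : E l = K * Q / l := rfl
          rw [e1, pow_succ]
          field_simp
  -- E tends to zero
  have hE0 : Tendsto E atTop (nhds 0) := by
    have hEeq : E = fun l : ℕ => (K * (Real.log 3 + (1/2) * Real.log K + (1/2) * D)) * (1/(l:ℝ))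
        + (K * ((n:ℝ)/2 + C/2)) * (Real.log l / l) := by
      funext l
      rw [hEdef]
      ring
    rw [hEeq]
    have h1 : Tendsto (fun l : ℕ => 1/(l:ℝ)) atTop (nhds 0) :=
      tendsto_one_div_atTop_nhds_zero_nat
    have h2 : Tendsto (fun l : ℕ => Real.log l / l) atTop (nhds 0) :=
      (Real.isLittleO_log_id_atTop.tendsto_div_nhds_zero).comp tendsto_natCast_atTop_atTop
    have hA := h1.const_mul (K * (Real.log 3 + (1/2) * Real.log K + (1/2) * D))
    have hB := h2.const_mul (K * ((n:ℝ)/2 + C/2))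
    have := hA.add hB
    simpa using this
  -- squeeze
  have h3 : Tendsto (fun l => F l - Rl l / 2) atTop (nhds 0) := by
    refine squeeze_zero_norm' ?_ hE0
    filter_upwards [eventually_ge_atTop 1] with l hl
    simpa [Real.norm_eq_abs] using key l hl
  have h4 : Tendsto (fun l => Rl l / 2) atTop (nhds ((∫ x in Θ, φ x) / 2)) :=
    hRiem.div_const 2
  have h5 := h3.add h4
  have h6 : Tendsto F atTop (nhds ((1/2) * ∫ x in Θ, φ x)) := by
    have heq : (fun l => (F l - Rl l / 2) + Rl l / 2) = F := by funext l; ring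
    have hval : (0:ℝ) + (∫ x in Θ, φ x) / 2 = (1/2) * ∫ x in Θ, φ x := by ring
    rwa [heq, hval] at h5
  exact h6
end

section
/- Let Θ = { (x, y, z) ∈ ℝ³ : 0 ≤ y ≤ 1, 0 ≤ z ≤ 1, x² ≤ y·z }. Then Θ is a compact convex subset of ℝ³; its projection under p(x,y,z) = (x,y) is p(Θ) = { (x,y) ∈ ℝ² : x² ≤ y ≤ 1 }; the function ϑ on p(Θ) defined by ϑ(x,y) = min{ z : (x,y,z) ∈ Θ } satisfies ϑ(x,y) = x²/y for (x,y) ≠ (0,0) and ϑ(0,0) = 0; and ϑ is not continuous at (0,0). -/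
/-- The set `Θ = {(x,y,z) : 0 ≤ y ≤ 1, 0 ≤ z ≤ 1, x² ≤ yz}` of the Remark
after Lemma 4.2. -/
def ThetaEx : Set (ℝ × ℝ × ℝ) :=
  {p | 0 ≤ p.2.1 ∧ p.2.1 ≤ 1 ∧ 0 ≤ p.2.2 ∧ p.2.2 ≤ 1 ∧ p.1 ^ 2 ≤ p.2.1 * p.2.2}

/-- The lower-boundary function `ϑ(x,y) = min{z : (x,y,z) ∈ Θ}` (as an
infimum; the theorem asserts it is attained). -/
noncomputable def lowerBdry (q : ℝ × ℝ) : ℝ :=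
  sInf {z : ℝ | (q.1, q.2, z) ∈ ThetaEx}

lemma cross_ineq (x₁ y₁ z₁ x₂ y₂ z₂ : ℝ) (hy₁ : 0 ≤ y₁) (hz₁ : 0 ≤ z₁) (hy₂ : 0 ≤ y₂)
    (hz₂ : 0 ≤ z₂) (h1 : x₁^2 ≤ y₁*z₁) (h2 : x₂^2 ≤ y₂*z₂) :
    2*(x₁*x₂) ≤ y₁*z₂ + y₂*z₁ := by
  rcases eq_or_lt_of_le hz₁ with h | h
  · have hx1 : x₁ = 0 := by nlinarith
    subst hx1
    nlinarith [mul_nonneg hy₁ hz₂, mul_nonneg hy₂ hz₁]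
  rcases eq_or_lt_of_le hz₂ with h' | h'
  · have hx2 : x₂ = 0 := by nlinarith
    subst hx2
    nlinarith [mul_nonneg hy₁ hz₂, mul_nonneg hy₂ hz₁]
  nlinarith [sq_nonneg (x₁*z₂ - x₂*z₁), mul_pos h h',
    mul_le_mul_of_nonneg_right h1 (sq_nonneg z₂),
    mul_le_mul_of_nonneg_right h2 (sq_nonneg z₁)]

lemma sliceEq (x y : ℝ) (hy : 0 < y) (hxy : x^2 ≤ y) (hy1 : y ≤ 1) :
    {z : ℝ | (x, y, z) ∈ ThetaEx} = Set.Icc (x^2/y) 1 := by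
  ext z
  simp only [ThetaEx, Set.mem_setOf_eq, Set.mem_Icc]
  constructor
  · rintro ⟨-, -, hz0, hz1, hxz⟩
    refine ⟨?_, hz1⟩
    rw [div_le_iff₀ hy]
    linarith [mul_comm y z, hxz]
  · rintro ⟨h1, h2⟩
    have h0 : 0 ≤ x^2/y := div_nonneg (sq_nonneg x) hy.le
    refine ⟨hy.le, hy1, le_trans h0 h1, h2, ?_⟩
    calc x^2 = (x^2/y)*y := by field_simp
    _ ≤ z*y := mul_le_mul_of_nonneg_right h1 hy.le
    _ = y*z := mul_comm _ _

lemma slice_zero : {z : ℝ | ((0:ℝ), (0:ℝ), z) ∈ ThetaEx} = Set.Icc (0:ℝ) 1 := by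
  ext z
  simp only [ThetaEx, Set.mem_setOf_eq, Set.mem_Icc]
  constructor
  · rintro ⟨-, -, hz0, hz1, -⟩; exact ⟨hz0, hz1⟩
  · rintro ⟨h1, h2⟩; exact ⟨le_refl 0, zero_le_one, h1, h2, by norm_num⟩

lemma least_aux (q : ℝ × ℝ) (h1 : q.1 ^ 2 ≤ q.2) (h2 : q.2 ≤ 1) :
    IsLeast {z : ℝ | (q.1, q.2, z) ∈ ThetaEx} (lowerBdry q) := by
  rcases eq_or_lt_of_le (le_trans (sq_nonneg q.1) h1) with h0 | h0
  · have hx : q.1 = 0 := by nlinarith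
    have hs : {z : ℝ | (q.1, q.2, z) ∈ ThetaEx} = Set.Icc (0:ℝ) 1 := by
      rw [hx, ← h0]; exact slice_zero
    rw [lowerBdry, hs, csInf_Icc zero_le_one]
    exact isLeast_Icc zero_le_one
  · have hs := sliceEq q.1 q.2 h0 h1 h2
    have hle : q.1^2/q.2 ≤ 1 := (div_le_one h0).mpr h1
    rw [lowerBdry, hs, csInf_Icc hle]
    exact isLeast_Icc hle

lemma formula_aux (q : ℝ × ℝ) (h1 : q.1 ^ 2 ≤ q.2) (h2 : q.2 ≤ 1) (hq : q ≠ (0, 0)) :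
    lowerBdry q = q.1 ^ 2 / q.2 := by
  rcases eq_or_lt_of_le (le_trans (sq_nonneg q.1) h1) with h0 | h0
  · exfalso
    have hx : q.1 = 0 := by nlinarith
    exact hq (Prod.ext hx h0.symm)
  · rw [lowerBdry, sliceEq q.1 q.2 h0 h1 h2, csInf_Icc ((div_le_one h0).mpr h1)]

lemma lb_zero : lowerBdry (0, 0) = 0 := by
  rw [lowerBdry]
  simp only
  rw [slice_zero, csInf_Icc zero_le_one]

/-- The Remark after Lemma 4.2: `Θ` is a compact convex subset of `ℝ³`, its
projection `p(Θ)` under `p(x,y,z) = (x,y)` is `{(x,y) : x² ≤ y ≤ 1}`, the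
lower-boundary function `ϑ` is the minimum, is given by `ϑ(x,y) = x²/y` for
`(x,y) ≠ (0,0)` and `ϑ(0,0) = 0`, and `ϑ` is not continuous at `(0,0)`
(as a function on `p(Θ)`). -/
theorem lower_boundary_not_continuous :
    IsCompact ThetaEx ∧ Convex ℝ ThetaEx ∧
    ((fun p : ℝ × ℝ × ℝ => (p.1, p.2.1)) '' ThetaEx =
      {q : ℝ × ℝ | q.1 ^ 2 ≤ q.2 ∧ q.2 ≤ 1}) ∧
    (∀ q : ℝ × ℝ, q.1 ^ 2 ≤ q.2 → q.2 ≤ 1 →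
      IsLeast {z : ℝ | (q.1, q.2, z) ∈ ThetaEx} (lowerBdry q)) ∧
    (∀ q : ℝ × ℝ, q.1 ^ 2 ≤ q.2 → q.2 ≤ 1 → q ≠ (0, 0) →
      lowerBdry q = q.1 ^ 2 / q.2) ∧
    lowerBdry (0, 0) = 0 ∧
    ¬ContinuousWithinAt lowerBdry {q : ℝ × ℝ | q.1 ^ 2 ≤ q.2 ∧ q.2 ≤ 1} (0, 0) := by
  refine ⟨?_, ?_, ?_, least_aux, formula_aux, lb_zero, ?_⟩
  · -- compact
    have hsub : ThetaEx ⊆ Set.Icc ((-1 : ℝ), (0:ℝ), (0:ℝ)) (1, 1, 1) := by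
      rintro ⟨x, y, z⟩ ⟨hy, hy1, hz, hz1, hxz⟩
      dsimp only at hy hy1 hz hz1 hxz
      have hx2 : x^2 ≤ 1 := by nlinarith
      simp only [Set.mem_Icc, Prod.mk_le_mk]
      refine ⟨⟨by nlinarith, hy, hz⟩, by nlinarith, hy1, hz1⟩
    have hclosed : IsClosed ThetaEx := by
      unfold ThetaEx
      simp only [Set.setOf_and]
      refine IsClosed.inter (isClosed_le continuous_const (by fun_prop)) ?_
      refine IsClosed.inter (isClosed_le (by fun_prop) continuous_const) ?_
      refine IsClosed.inter (isClosed_le continuous_const (by fun_prop)) ?_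
      refine IsClosed.inter (isClosed_le (by fun_prop) continuous_const) ?_
      exact isClosed_le (by fun_prop) (by fun_prop)
    exact IsCompact.of_isClosed_subset isCompact_Icc hclosed hsub
  · -- convex
    rintro ⟨x₁, y₁, z₁⟩ ⟨hy₁, hy₁', hz₁, hz₁', h1⟩ ⟨x₂, y₂, z₂⟩ ⟨hy₂, hy₂', hz₂, hz₂', h2⟩
      a b ha hb hab
    have hc := cross_ineq x₁ y₁ z₁ x₂ y₂ z₂ hy₁ hz₁ hy₂ hz₂ h1 h2
    simp only [ThetaEx, Prod.smul_mk, Prod.mk_add_mk, smul_eq_mul, Set.mem_setOf_eq]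
    refine ⟨by positivity, by nlinarith, by positivity, by nlinarith, ?_⟩
    nlinarith [mul_le_mul_of_nonneg_left h1 (sq_nonneg a),
      mul_le_mul_of_nonneg_left h2 (sq_nonneg b),
      mul_le_mul_of_nonneg_left hc (mul_nonneg ha hb)]
  · -- projection
    ext q
    constructor
    · rintro ⟨⟨x, y, z⟩, ⟨hy, hy1, hz, hz1, hxz⟩, rfl⟩
      exact ⟨by nlinarith, hy1⟩
    · rintro ⟨h1, h2⟩
      exact ⟨(q.1, q.2, 1), ⟨le_trans (sq_nonneg _) h1, h2, zero_le_one, le_refl 1,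
        by simpa using h1⟩, rfl⟩
  · -- not continuous
    intro hcont
    set S : Set (ℝ × ℝ) := {q : ℝ × ℝ | q.1 ^ 2 ≤ q.2 ∧ q.2 ≤ 1} with hS
    set u : ℕ → ℝ × ℝ := fun n => ((1:ℝ)/(n+1), ((1:ℝ)/(n+1))^2) with hu
    have hpos : ∀ n : ℕ, (0:ℝ) < 1/(n+1) := by
      intro n
      positivity
    have htend1 : Filter.Tendsto (fun n : ℕ => (1:ℝ)/(n+1)) Filter.atTop (nhds 0) :=
      tendsto_one_div_add_atTop_nhds_zero_nat
    have htend : Filter.Tendsto u Filter.atTop (nhdsWithin (0, 0) S) := by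
      rw [tendsto_nhdsWithin_iff]
      constructor
      · have h2 : Filter.Tendsto (fun n : ℕ => ((1:ℝ)/(n+1))^2) Filter.atTop (nhds 0) := by
          have := htend1.pow 2
          simpa using this
        exact htend1.prodMk_nhds h2
      · filter_upwards with n
        have hle1 : (1:ℝ)/(n+1) ≤ 1 := by
          rw [div_le_one (by positivity)]
          linarith [Nat.cast_nonneg (α := ℝ) n]
        refine ⟨le_refl _, ?_⟩
        show ((1:ℝ)/(n+1))^2 ≤ 1
        nlinarith [(hpos n).le]
    have hval : ∀ n, lowerBdry (u n) = 1 := by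
      intro n
      have hne : u n ≠ (0, 0) := by
        intro h
        have := hpos n
        simp only [hu, Prod.mk.injEq] at h
        linarith [h.1]
      have hle1 : (1:ℝ)/(n+1) ≤ 1 := by
        rw [div_le_one (by positivity)]
        linarith [Nat.cast_nonneg (α := ℝ) n]
      have hy1 : ((1:ℝ)/(n+1))^2 ≤ 1 := by
        nlinarith [(hpos n).le]
      rw [formula_aux (u n) (le_refl _) hy1 hne]
      simp only [hu]
      rw [div_self (by positivity)]
    have hlim : Filter.Tendsto (fun n => lowerBdry (u n)) Filter.atTop (nhds 0) := by
      have := hcont.tendsto.comp htend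
      rwa [lb_zero] at this
    have : Filter.Tendsto (fun _ : ℕ => (1:ℝ)) Filter.atTop (nhds 0) := by
      simpa [hval] using hlim
    have := tendsto_nhds_unique this tendsto_const_nhds
    norm_num at this
end

section
/- Fix a = (a_0, a_1, …, a_n) ∈ ℝ_{>0}^{n+1} with a_0 + a_1 + ⋯ + a_n > 1. Let (b_1, …, b_n) be a boundary point of Θ_a (in ℝ^n) and set b_0 = 1 − b_1 − ⋯ − b_n. Assume that at most one of b_0, b_1, …, b_n is zero. Then Θ_a has a unique supporting hyperplane at (b_1, …, b_n). Moreover, if b_0 = 0 the supporting hyperplane is { x : x_1 + ⋯ + x_n = 1 }, and if b_i = 0 for some i with 1 ≤ i ≤ n the supporting hyperplane is { x : x_i = 0 }. -/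
/-- `Θ_a = {x ∈ Δ_n : φ_a(1 − x_1 − ⋯ − x_n, x_1, …, x_n) ≥ 0}`. -/
def Theta {n : ℕ} (a : Fin (n + 1) → ℝ) : Set (Fin n → ℝ) :=
  {x | (∀ i, 0 ≤ x i) ∧ ∑ i, x i ≤ 1 ∧
    0 ≤ charFn a (Fin.cons (1 - ∑ i, x i) x)}

/-- `H` is a supporting hyperplane of the set `Θ` at the point `b`:
`H = {x : Σ α_i x_i = β}` with `α ≠ 0`, `Θ ⊆ {x : Σ α_i x_i ≥ β}` and
`Σ α_i b_i = β`. -/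
def IsSuppHyp {n : ℕ} (Θ : Set (Fin n → ℝ)) (b : Fin n → ℝ)
    (H : Set (Fin n → ℝ)) : Prop :=
  ∃ α : Fin n → ℝ, ∃ β : ℝ, α ≠ 0 ∧
    H = {x | ∑ i, α i * x i = β} ∧
    Θ ⊆ {x | β ≤ ∑ i, α i * x i} ∧ ∑ i, α i * b i = β

lemma charFn_eq {n : ℕ} (a x : Fin (n + 1) → ℝ) :
    charFn a x = ∑ i, (-(x i * Real.log (x i)) + x i * Real.log (a i)) := by
  simp [charFn, Finset.sum_add_distrib]
lemma key_ineq (a y p : ℝ) (hy : 0 ≤ y) (hp : 0 < p) :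
    -(y * Real.log y) + y * Real.log a ≤
      -(p * Real.log p) + p * Real.log a + (Real.log a - Real.log p - 1) * (y - p) := by
  have hkey : y * (Real.log p - Real.log y) ≤ p - y := by
    rcases eq_or_lt_of_le hy with h | h
    · simp [← h, hp.le]
    · have h1 : Real.log (p / y) ≤ p / y - 1 := Real.log_le_sub_one_of_pos (div_pos hp h)
      rw [Real.log_div hp.ne' h.ne'] at h1
      have := mul_le_mul_of_nonneg_left h1 h.le
      calc y * (Real.log p - Real.log y) ≤ y * (p / y - 1) := this
        _ = p - y := by field_simp
  nlinarith [hkey]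
lemma sum_cons_mul {n : ℕ} (c : Fin (n + 1) → ℝ) (w : Fin n → ℝ) :
    ∑ j, c j * (Fin.cons (-∑ i, w i) w : Fin (n + 1) → ℝ) j
      = ∑ i, (c i.succ - c 0) * w i := by
  rw [Fin.sum_univ_succ]
  simp only [Fin.cons_zero, Fin.cons_succ, sub_mul]
  rw [Finset.sum_sub_distrib, ← Finset.mul_sum]
  ring
lemma hasDerivAt_term (a B V : ℝ) (hB : 0 < B) :
    HasDerivAt (fun t => -((B + t * V) * Real.log (B + t * V)) + (B + t * V) * Real.log a)
      ((Real.log a - Real.log B - 1) * V) 0 := by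
  have h1 : HasDerivAt (fun t : ℝ => B + t * V) V 0 := by
    simpa using (hasDerivAt_mul_const V).const_add B
  have hne : B + 0 * V ≠ 0 := by simpa using hB.ne'
  have h2 := h1.log hne
  have h3 : HasDerivAt (fun t => -((B + t * V) * Real.log (B + t * V)) + (B + t * V) * Real.log a) _ 0 :=
    (h1.mul h2).neg.add (h1.mul_const (Real.log a))
  convert h3 using 1
  have : B + 0 * V = B := by ring
  rw [this]
  field_simp
  ring
lemma hasDerivAt_charFn {n : ℕ} (a B V : Fin (n + 1) → ℝ) (hB : ∀ i, 0 < B i) :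
    HasDerivAt (fun t => charFn a (fun i => B i + t * V i))
      (∑ i, (Real.log (a i) - Real.log (B i) - 1) * V i) 0 := by
  have : (fun t => charFn a (fun i => B i + t * V i))
      = fun t => ∑ i, (-((B i + t * V i) * Real.log (B i + t * V i))
          + (B i + t * V i) * Real.log (a i)) := by
    funext t; rw [charFn_eq]
  rw [this]
  exact HasDerivAt.fun_sum fun i _ => hasDerivAt_term (a i) (B i) (V i) (hB i)
lemma continuous_g {n : ℕ} (a : Fin (n + 1) → ℝ) :
    Continuous fun x : Fin n → ℝ => charFn a (Fin.cons (1 - ∑ i, x i) x) := by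
  have hterm : ∀ c : ℝ, Continuous fun u : ℝ => -(u * Real.log u) + u * Real.log c :=
    fun c => Real.continuous_mul_log.neg.add (continuous_id.mul continuous_const)
  have : (fun x : Fin n → ℝ => charFn a (Fin.cons (1 - ∑ i, x i) x))
      = fun x => ∑ j, (fun u => -(u * Real.log u) + u * Real.log (a j))
          ((Fin.cons (1 - ∑ i, x i) x : Fin (n + 1) → ℝ) j) := by
    funext x; rw [charFn_eq]
  rw [this]
  refine continuous_finset_sum _ fun j _ => (hterm (a j)).comp ?_
  refine Fin.cases ?_ ?_ j
  · simp only [Fin.cons_zero]; exact continuous_const.sub (continuous_finset_sum _ fun i _ => continuous_apply i)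
  · intro k; simpa using continuous_apply k
lemma isClosed_Theta {n : ℕ} (a : Fin (n + 1) → ℝ) : IsClosed (Theta a) := by
  have h1 : IsClosed {x : Fin n → ℝ | ∀ i, 0 ≤ x i} := by
    have : {x : Fin n → ℝ | ∀ i, 0 ≤ x i} = ⋂ i, {x | 0 ≤ x i} := by ext x; simp
    rw [this]
    exact isClosed_iInter fun i => isClosed_le continuous_const (continuous_apply i)
  have h2 : IsClosed {x : Fin n → ℝ | ∑ i, x i ≤ 1} :=
    isClosed_le (continuous_finset_sum _ fun i _ => continuous_apply i) continuous_const
  have h3 : IsClosed {x : Fin n → ℝ | 0 ≤ charFn a (Fin.cons (1 - ∑ i, x i) x)} :=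
    isClosed_le continuous_const (continuous_g a)
  have : Theta a = {x : Fin n → ℝ | ∀ i, 0 ≤ x i} ∩ ({x | ∑ i, x i ≤ 1} ∩ {x | 0 ≤ charFn a (Fin.cons (1 - ∑ i, x i) x)}) := rfl
  rw [this]; exact h1.inter (h2.inter h3)
lemma eventually_pos_of_hasDerivAt (F : ℝ → ℝ) (D : ℝ) (hF : HasDerivAt F D 0)
    (h0 : F 0 = 0) (hD : 0 < D) : ∀ᶠ t in nhdsWithin 0 (Set.Ioi 0), 0 < F t := by
  have h1 : Filter.Tendsto (slope F 0) (nhdsWithin 0 {(0:ℝ)}ᶜ) (nhds D) :=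
    hasDerivAt_iff_tendsto_slope.mp hF
  have h2 : Filter.Tendsto (slope F 0) (nhdsWithin 0 (Set.Ioi 0)) (nhds D) :=
    h1.mono_left (nhdsWithin_mono 0 (fun t ht => ne_of_gt ht))
  have h3 : ∀ᶠ t in nhdsWithin 0 (Set.Ioi 0), 0 < slope F 0 t :=
    h2.eventually (eventually_gt_nhds hD)
  filter_upwards [h3, self_mem_nhdsWithin] with t hs ht
  have ht' : (0:ℝ) < t := ht
  have : slope F 0 t = F t / t := by rw [slope_def_field]; rw [h0]; ring
  rw [this] at hs
  exact (div_pos_iff.mp hs).resolve_right (fun h => absurd ht' (not_lt.mpr h.2.le)) |>.1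
lemma eventually_coords {m : ℕ} (B V : Fin m → ℝ) (hnn : ∀ i, 0 ≤ B i)
    (h : ∀ i, 0 < B i ∨ 0 < V i) :
    ∀ᶠ t in nhdsWithin 0 (Set.Ioi 0), ∀ i, 0 ≤ B i + t * V i := by
  rw [Filter.eventually_all]
  intro i
  rcases h i with hp | hv
  · have hc : Filter.Tendsto (fun t : ℝ => B i + t * V i) (nhdsWithin 0 (Set.Ioi 0)) (nhds (B i)) := by
      have hcont : Continuous (fun t : ℝ => B i + t * V i) := by fun_prop
      have h2 := hcont.tendsto (0:ℝ)
      simp only [zero_mul, add_zero] at h2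
      exact h2.mono_left nhdsWithin_le_nhds
    exact (hc.eventually (eventually_gt_nhds hp)).mono fun t ht => ht.le
  · filter_upwards [self_mem_nhdsWithin] with t ht
    exact add_nonneg (hnn i) (mul_nonneg (le_of_lt ht) hv.le)
lemma eventually_pos_slopeInf {n : ℕ} (a B V : Fin (n + 1) → ℝ) (j : Fin (n + 1))
    (hBj : B j = 0) (hB : ∀ i, i ≠ j → 0 < B i) (hV : 0 < V j)
    (hφ : 0 ≤ charFn a B) :
    ∀ᶠ t in nhdsWithin 0 (Set.Ioi 0), 0 < charFn a (fun i => B i + t * V i) := by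
  set S : ℝ → ℝ := fun t => ∑ i ∈ Finset.univ.erase j,
    (-((B i + t * V i) * Real.log (B i + t * V i)) + (B i + t * V i) * Real.log (a i)) with hSdef
  obtain ⟨s, hS⟩ : ∃ s, HasDerivAt S s 0 :=
    ⟨_, HasDerivAt.fun_sum fun i hi => hasDerivAt_term (a i) (B i) (V i)
      (hB i (Finset.ne_of_mem_erase hi))⟩
  have hS0 : 0 ≤ S 0 := by
    have h1 : S 0 = ∑ i ∈ Finset.univ.erase j, (-(B i * Real.log (B i)) + B i * Real.log (a i)) := by
      simp [hSdef]
    have h2 : charFn a B = S 0 := by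
      rw [charFn_eq, ← Finset.add_sum_erase _ _ (Finset.mem_univ j), h1, hBj]
      simp
    linarith [hφ, h2]
  have hslope : Filter.Tendsto (slope S 0) (nhdsWithin 0 (Set.Ioi 0)) (nhds s) :=
    (hasDerivAt_iff_tendsto_slope.mp hS).mono_left (nhdsWithin_mono 0 fun t ht => ne_of_gt ht)
  have glog : Filter.Tendsto (fun t : ℝ => V j * (Real.log (a j) - Real.log t - Real.log (V j)))
      (nhdsWithin 0 (Set.Ioi 0)) Filter.atTop := by
    apply Filter.Tendsto.const_mul_atTop hV
    have h1 : Filter.Tendsto (fun t : ℝ => -Real.log t) (nhdsWithin 0 (Set.Ioi 0)) Filter.atTop :=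
      Filter.tendsto_neg_atTop_iff.mpr Real.tendsto_log_nhdsGT_zero
    have := Filter.tendsto_atTop_add_const_left (nhdsWithin (0:ℝ) (Set.Ioi 0))
      (Real.log (a j) - Real.log (V j)) h1
    refine this.congr fun t => by ring
  have hcomb : Filter.Tendsto
      (fun t : ℝ => V j * (Real.log (a j) - Real.log t - Real.log (V j)) + slope S 0 t)
      (nhdsWithin 0 (Set.Ioi 0)) Filter.atTop := glog.atTop_add hslope
  filter_upwards [hcomb.eventually_gt_atTop 0, self_mem_nhdsWithin] with t hgt ht
  have ht' : (0:ℝ) < t := ht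
  have h1 : charFn a (fun i => B i + t * V i)
      = (-((t * V j) * Real.log (t * V j)) + (t * V j) * Real.log (a j)) + S t := by
    rw [charFn_eq, ← Finset.add_sum_erase _ _ (Finset.mem_univ j), hBj]
    simp [hSdef]
  have h2 : -((t * V j) * Real.log (t * V j)) + (t * V j) * Real.log (a j)
      = t * (V j * (Real.log (a j) - Real.log t - Real.log (V j))) := by
    rw [Real.log_mul ht'.ne' hV.ne']; ring
  have h3 : S t = S 0 + t * slope S 0 t := by
    rw [slope_def_field, sub_zero, mul_div_assoc', mul_div_cancel_left₀ _ ht'.ne']; ring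
  rw [h1, h2, h3]
  nlinarith [mul_pos ht' hgt, hS0]
lemma sum_mul_expand {n : ℕ} (α b v : Fin n → ℝ) (t : ℝ) :
    ∑ i, α i * (b i + t * v i) = ∑ i, α i * b i + t * ∑ i, α i * v i := by
  rw [Finset.mul_sum, ← Finset.sum_add_distrib]
  exact Finset.sum_congr rfl fun i _ => by ring
lemma cons_shift {n : ℕ} (b v : Fin n → ℝ) (t : ℝ) :
    (Fin.cons (1 - ∑ i, (b i + t * v i)) (fun i => b i + t * v i) : Fin (n + 1) → ℝ)
      = fun j => (Fin.cons (1 - ∑ i, b i) b : Fin (n + 1) → ℝ) j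
          + t * (Fin.cons (-∑ i, v i) v : Fin (n + 1) → ℝ) j := by
  funext j
  refine Fin.cases ?_ (fun k => ?_) j
  · simp only [Fin.cons_zero, Finset.sum_add_distrib, ← Finset.mul_sum]
    ring
  · simp
lemma tangent_aux {n : ℕ} (a : Fin (n + 1) → ℝ) (b v : Fin n → ℝ)
    (hco : ∀ᶠ t in nhdsWithin 0 (Set.Ioi 0), ∀ j,
      0 ≤ (Fin.cons (1 - ∑ i, b i) b : Fin (n + 1) → ℝ) j
        + t * (Fin.cons (-∑ i, v i) v : Fin (n + 1) → ℝ) j)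
    (hφ : ∀ᶠ t in nhdsWithin 0 (Set.Ioi 0), 0 < charFn a
      (fun j => (Fin.cons (1 - ∑ i, b i) b : Fin (n + 1) → ℝ) j
        + t * (Fin.cons (-∑ i, v i) v : Fin (n + 1) → ℝ) j)) :
    ∃ t > 0, (fun i => b i + t * v i) ∈ Theta a := by
  obtain ⟨t, ⟨hc, hp⟩, ht⟩ := ((hco.and hφ).and self_mem_nhdsWithin).exists
  have ht' : (0:ℝ) < t := ht
  refine ⟨t, ht', ?_, ?_, ?_⟩
  · intro i
    have := hc i.succ
    simpa using this
  · have := hc 0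
    simp only [Fin.cons_zero] at this
    show ∑ i, (b i + t * v i) ≤ 1
    rw [Finset.sum_add_distrib, ← Finset.mul_sum]
    linarith
  · show 0 ≤ charFn a (Fin.cons (1 - ∑ i, (b i + t * v i)) (fun i => b i + t * v i))
    rw [cons_shift]
    exact hp.le
lemma exists_unique_of_normal {n : ℕ} (Θ : Set (Fin n → ℝ)) (b ν : Fin n → ℝ)
    (hν : ν ≠ 0)
    (hsupp : ∀ x ∈ Θ, ∑ i, ν i * b i ≤ ∑ i, ν i * x i)
    (htan : ∀ v : Fin n → ℝ, 0 < ∑ i, ν i * v i → ∃ t > 0, (fun i => b i + t * v i) ∈ Θ) :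
    ∃! H, IsSuppHyp Θ b H := by
  have hνν : 0 < ∑ i, ν i * ν i := by
    obtain ⟨i, hi⟩ := Function.ne_iff.mp hν
    refine Finset.sum_pos' (fun j _ => mul_self_nonneg _) ⟨i, Finset.mem_univ i, ?_⟩
    exact mul_self_pos.mpr (by simpa using hi)
  refine ⟨{x | ∑ i, ν i * x i = ∑ i, ν i * b i},
    ⟨ν, ∑ i, ν i * b i, hν, rfl, fun x hx => hsupp x hx, rfl⟩, ?_⟩
  rintro H ⟨α, β, hα, rfl, hΘ, hβ⟩
  have c1 : ∀ v : Fin n → ℝ, 0 < ∑ i, ν i * v i → 0 ≤ ∑ i, α i * v i := by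
    intro v hv
    obtain ⟨t, ht, hm⟩ := htan v hv
    have h2 : β ≤ ∑ i, α i * (b i + t * v i) := hΘ hm
    rw [sum_mul_expand, hβ] at h2
    nlinarith
  have hαν : 0 ≤ ∑ i, α i * ν i := c1 ν hνν
  have c2 : ∀ v : Fin n → ℝ, 0 ≤ ∑ i, ν i * v i → 0 ≤ ∑ i, α i * v i := by
    intro v hv
    by_contra hneg
    push_neg at hneg
    set ε := -(∑ i, α i * v i) / (∑ i, α i * ν i + 1) with hε
    have hε0 : 0 < ε := div_pos (by linarith) (by linarith)
    have h1 : 0 < ∑ i, ν i * (v i + ε * ν i) := by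
      rw [sum_mul_expand ν v ν ε]
      nlinarith [mul_pos hε0 hνν]
    have h2 := c1 (fun i => v i + ε * ν i) h1
    rw [sum_mul_expand α v ν ε] at h2
    have key : ε * (∑ i, α i * ν i) < -(∑ i, α i * v i) := by
      rw [hε, div_mul_eq_mul_div, div_lt_iff₀ (by linarith)]
      nlinarith
    linarith
  have c3 : ∀ v : Fin n → ℝ, ∑ i, ν i * v i = 0 → ∑ i, α i * v i = 0 := by
    intro v hv
    have h1 := c2 v (le_of_eq hv.symm)
    have h2 := c2 (fun i => -v i) (by
      simp only [mul_neg]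
      rw [Finset.sum_neg_distrib, hv, neg_zero])
    simp only [mul_neg] at h2
    rw [Finset.sum_neg_distrib] at h2
    linarith
  set c := (∑ i, α i * ν i) / (∑ i, ν i * ν i) with hcdef
  have hcomm : ∀ (u z : Fin n → ℝ), ∑ i, u i * z i = ∑ i, z i * u i :=
    fun u z => Finset.sum_congr rfl fun i _ => mul_comm _ _
  set w : Fin n → ℝ := fun i => α i - c * ν i with hwdef
  have hsub : ∀ (u : Fin n → ℝ), ∑ i, u i * w i = ∑ i, u i * α i - c * ∑ i, u i * ν i := by
    intro u
    calc ∑ i, u i * w i = ∑ i, (u i * α i - c * (u i * ν i)) :=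
          Finset.sum_congr rfl fun i _ => by simp only [hwdef]; ring
      _ = ∑ i, u i * α i - c * ∑ i, u i * ν i := by
          rw [Finset.sum_sub_distrib, ← Finset.mul_sum]
  have hνw : ∑ i, ν i * w i = 0 := by
    rw [hsub ν, hcomm ν α, hcdef]
    rw [div_mul_cancel₀ _ hνν.ne', sub_self]
  have hαw : ∑ i, α i * w i = 0 := c3 w hνw
  have hww : ∑ i, w i * w i = 0 := by
    have h := hsub w
    rw [hcomm w α, hαw, hcomm w ν, hνw] at h
    simpa using h
  have hw : ∀ i, α i = c * ν i := by
    intro i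
    have hzero := (Finset.sum_eq_zero_iff_of_nonneg
      (fun j _ => mul_self_nonneg (w j))).mp hww i (Finset.mem_univ i)
    have := mul_self_eq_zero.mp hzero
    have : α i - c * ν i = 0 := this
    linarith
  have hc0 : c ≠ 0 := by
    intro h
    apply hα
    funext i
    rw [show α i = c * ν i from hw i, h, zero_mul]
    rfl
  have hαx : ∀ x : Fin n → ℝ, ∑ i, α i * x i = c * ∑ i, ν i * x i := by
    intro x
    rw [Finset.mul_sum]
    exact Finset.sum_congr rfl fun i _ => by rw [hw i]; ring
  have hβc : β = c * ∑ i, ν i * b i := by rw [← hβ, hαx]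
  ext x
  simp only [Set.mem_setOf_eq]
  rw [hαx, hβc]
  constructor
  · intro h; exact mul_left_cancel₀ hc0 h
  · intro h; rw [h]

/-- Proposition 4.3: if `Σ a_i > 1` and at most one of `b_0, b_1, …, b_n` is
zero at a boundary point `b` of `Θ_a` (with `b_0 = 1 − b_1 − ⋯ − b_n`), then
`Θ_a` has a unique supporting hyperplane at `b`.  Moreover if `b_0 = 0` it is
`{x : Σ x_i = 1}`, and if `b_i = 0` for some `1 ≤ i ≤ n` it is `{x : x_i = 0}`. -/
theorem unique_supporting_hyperplane (n : ℕ) (a : Fin (n + 1) → ℝ)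
    (ha : ∀ i, 0 < a i) (hsum : 1 < ∑ i, a i)
    (b : Fin n → ℝ) (hb : b ∈ frontier (Theta a))
    (hzero : Set.ncard {i : Fin (n + 1) | (Fin.cons (1 - ∑ j, b j) b : Fin (n + 1) → ℝ) i = 0} ≤ 1) :
    (∃! H : Set (Fin n → ℝ), IsSuppHyp (Theta a) b H) ∧
    (1 - ∑ i, b i = 0 →
      IsSuppHyp (Theta a) b {x | ∑ i, x i = 1}) ∧
    (∀ i : Fin n, b i = 0 →
      IsSuppHyp (Theta a) b {x | x i = 0}) := by
  classical
  have hbΘ : b ∈ Theta a := (isClosed_Theta a).frontier_subset hb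
  obtain ⟨hbnn, hbsum, hbφ⟩ := hbΘ
  set B : Fin (n + 1) → ℝ := Fin.cons (1 - ∑ j, b j) b with hBdef
  have hBnn : ∀ j, 0 ≤ B j := by
    intro j
    refine Fin.cases ?_ (fun k => ?_) j
    · show (0:ℝ) ≤ B 0
      rw [hBdef, Fin.cons_zero]; linarith
    · show (0:ℝ) ≤ B k.succ
      rw [hBdef, Fin.cons_succ]; exact hbnn k
  have hBsum : ∑ j, B j = 1 := by rw [hBdef, Fin.sum_cons]; ring
  -- clause 3
  have clause3 : ∀ i : Fin n, b i = 0 → IsSuppHyp (Theta a) b {x | x i = 0} := by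
    intro i hbi
    refine ⟨fun j => if j = i then 1 else 0, 0, ?_, ?_, ?_, ?_⟩
    · intro h
      have := congrFun h i
      simp at this
    · ext x
      simp [ite_mul, Finset.sum_ite_eq']
    · intro x hx
      simp only [Set.mem_setOf_eq, ite_mul, one_mul, zero_mul, Finset.sum_ite_eq',
        Finset.mem_univ, if_true]
      exact hx.1 i
    · simp [ite_mul, Finset.sum_ite_eq', hbi]
  -- clause 2
  have clause2 : 1 - ∑ i, b i = 0 → IsSuppHyp (Theta a) b {x | ∑ i, x i = 1} := by
    intro h0
    have hn : n ≠ 0 := by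
      intro h
      subst h
      norm_num at h0
    refine ⟨fun _ => -1, -1, ?_, ?_, ?_, ?_⟩
    · intro h
      have := congrFun h ⟨0, Nat.pos_of_ne_zero hn⟩
      norm_num at this
    · ext x
      simp only [Set.mem_setOf_eq, neg_one_mul, Finset.sum_neg_distrib]
      constructor <;> intro h <;> linarith
    · intro x hx
      simp only [Set.mem_setOf_eq, neg_one_mul, Finset.sum_neg_distrib]
      linarith [hx.2.1]
    · simp only [neg_one_mul, Finset.sum_neg_distrib]
      have : ∑ i, b i = 1 := by linarith
      rw [this]
  refine ⟨?_, clause2, clause3⟩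
  by_cases hz : ∃ j, B j = 0
  · -- a zero coordinate j₀
    obtain ⟨j₀, hj₀⟩ := hz
    have hpos : ∀ i, i ≠ j₀ → 0 < B i := by
      intro i hij
      rcases (hBnn i).lt_or_eq with h | h
      · exact h
      · exfalso
        have hsubset : ({i, j₀} : Set (Fin (n + 1))) ⊆ {i : Fin (n + 1) | B i = 0} := by
          intro k hk
          rcases hk with rfl | hk
          · exact h.symm
          · simp only [Set.mem_singleton_iff] at hk
            subst hk; exact hj₀
        have h2 : 2 ≤ Set.ncard {i : Fin (n + 1) | B i = 0} := by
          rw [← Set.ncard_pair hij]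
          exact Set.ncard_le_ncard hsubset (Set.toFinite _)
        omega
    set d : Fin (n + 1) → ℝ := fun j => if j = j₀ then (1 : ℝ) else 0 with hd
    set ν : Fin n → ℝ := fun i => d i.succ - d 0 with hν
    have hind : ∀ w : Fin n → ℝ,
        ∑ i, ν i * w i = (Fin.cons (-∑ i, w i) w : Fin (n + 1) → ℝ) j₀ := by
      intro w
      calc ∑ i, ν i * w i
          = ∑ j, d j * (Fin.cons (-∑ i, w i) w : Fin (n + 1) → ℝ) j := (sum_cons_mul d w).symm
        _ = (Fin.cons (-∑ i, w i) w : Fin (n + 1) → ℝ) j₀ := by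
            simp [hd, ite_mul, Finset.sum_ite_eq']
    have hν0 : ν ≠ 0 := by
      rcases eq_or_ne j₀ 0 with rfl | hne
      · have hn : n ≠ 0 := by
          intro h
          subst h
          have hB1 : B 0 = 1 := by rw [hBdef, Fin.cons_zero]; simp
          rw [hB1] at hj₀
          norm_num at hj₀
        intro h
        have := congrFun h ⟨0, Nat.pos_of_ne_zero hn⟩
        simp [hν, hd, Fin.succ_ne_zero] at this
      · obtain ⟨k, hk⟩ := Fin.eq_succ_of_ne_zero hne
        intro h
        have := congrFun h k
        simp [hν, hd, ← hk, hne.symm] at this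
    have hsupp : ∀ x ∈ Theta a, ∑ i, ν i * b i ≤ ∑ i, ν i * x i := by
      intro x hx
      obtain ⟨hx0, hx1, hxφ⟩ := hx
      have h1 : ∑ i, ν i * x i - ∑ i, ν i * b i = ∑ i, ν i * (x i - b i) := by
        simp [mul_sub, Finset.sum_sub_distrib]
      have h2 := hind (fun i => x i - b i)
      have hvec : (Fin.cons (-∑ i, (x i - b i)) (fun i => x i - b i) : Fin (n + 1) → ℝ) j₀
          = (Fin.cons (1 - ∑ i, x i) x : Fin (n + 1) → ℝ) j₀ - B j₀ := by
        rcases Fin.eq_zero_or_eq_succ j₀ with rfl | ⟨k, rfl⟩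
        · simp [hBdef, Finset.sum_sub_distrib]; try ring
        · simp [hBdef]
      have hXnn : 0 ≤ (Fin.cons (1 - ∑ i, x i) x : Fin (n + 1) → ℝ) j₀ := by
        rcases Fin.eq_zero_or_eq_succ j₀ with rfl | ⟨k, rfl⟩
        · simp only [Fin.cons_zero]; linarith
        · simp only [Fin.cons_succ]; exact hx0 k
      rw [hj₀, sub_zero] at hvec
      rw [hvec] at h2
      linarith
    have htan : ∀ v : Fin n → ℝ, 0 < ∑ i, ν i * v i →
        ∃ t > 0, (fun i => b i + t * v i) ∈ Theta a := by
      intro v hv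
      rw [hind v] at hv
      have hev := eventually_pos_slopeInf a B (Fin.cons (-∑ i, v i) v) j₀ hj₀ hpos hv hbφ
      have hco := eventually_coords B (Fin.cons (-∑ i, v i) v) hBnn (fun i => by
        rcases eq_or_ne i j₀ with rfl | h
        · exact Or.inr hv
        · exact Or.inl (hpos i h))
      rw [hBdef] at hco hev
      exact tangent_aux a b v hco hev
    exact exists_unique_of_normal (Theta a) b ν hν0 hsupp htan
  · -- all coordinates positive
    push_neg at hz
    have hBpos : ∀ j, 0 < B j := fun j => lt_of_le_of_ne (hBnn j) (Ne.symm (hz j))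
    have hφ0 : charFn a B = 0 := by
      rcases eq_or_lt_of_le hbφ with h | h
      · exact h.symm
      · exfalso
        apply hb.2
        rw [mem_interior]
        refine ⟨{x | (∀ i, 0 < x i) ∧ (∑ i, x i < 1) ∧
          0 < charFn a (Fin.cons (1 - ∑ i, x i) x)}, ?_, ?_, ?_⟩
        · intro x hx
          exact ⟨fun i => (hx.1 i).le, hx.2.1.le, hx.2.2.le⟩
        · have o1 : IsOpen {x : Fin n → ℝ | ∀ i, 0 < x i} := by
            have he : {x : Fin n → ℝ | ∀ i, 0 < x i} = ⋂ i, {x | 0 < x i} := by ext; simp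
            rw [he]
            exact isOpen_iInter_of_finite fun i =>
              isOpen_lt continuous_const (continuous_apply i)
          have o2 : IsOpen {x : Fin n → ℝ | ∑ i, x i < 1} :=
            isOpen_lt (continuous_finset_sum _ fun i _ => continuous_apply i) continuous_const
          have o3 : IsOpen {x : Fin n → ℝ | 0 < charFn a (Fin.cons (1 - ∑ i, x i) x)} :=
            isOpen_lt continuous_const (continuous_g a)
          exact o1.inter (o2.inter o3)
        · refine ⟨fun i => ?_, ?_, h⟩
          · have := hBpos i.succ
            rw [hBdef, Fin.cons_succ] at this
            exact this
          · have := hBpos 0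
            rw [hBdef, Fin.cons_zero] at this
            linarith
    set cf : Fin (n + 1) → ℝ := fun j => Real.log (a j) - Real.log (B j) with hcf
    set ν : Fin n → ℝ := fun i => cf i.succ - cf 0 with hν
    have hν0 : ν ≠ 0 := by
      intro h
      have hconst : ∀ j, cf j = cf 0 := by
        intro j
        refine Fin.cases rfl (fun k => ?_) j
        have := congrFun h k
        simp only [hν, Pi.zero_apply] at this
        linarith [sub_eq_zero.mp this]
      have h1 : charFn a B = cf 0 := by
        rw [charFn_eq]
        calc ∑ j, (-(B j * Real.log (B j)) + B j * Real.log (a j))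
            = ∑ j, B j * cf j := Finset.sum_congr rfl fun j _ => by simp [hcf]; ring
          _ = ∑ j, B j * cf 0 := Finset.sum_congr rfl fun j _ => by rw [hconst j]
          _ = (∑ j, B j) * cf 0 := (Finset.sum_mul _ _ _).symm
          _ = cf 0 := by rw [hBsum, one_mul]
      have hcf0 : cf 0 = 0 := by rw [← h1, hφ0]
      have haB : ∀ j, a j = B j := by
        intro j
        have hj : cf j = 0 := by rw [hconst j, hcf0]
        simp only [hcf] at hj
        have hlog : Real.log (a j) = Real.log (B j) := by linarith
        calc a j = Real.exp (Real.log (a j)) := (Real.exp_log (ha j)).symm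
          _ = Real.exp (Real.log (B j)) := by rw [hlog]
          _ = B j := Real.exp_log (hBpos j)
      have : ∑ j, a j = 1 := by rw [Finset.sum_congr rfl fun j _ => haB j, hBsum]
      linarith
    have hsupp : ∀ x ∈ Theta a, ∑ i, ν i * b i ≤ ∑ i, ν i * x i := by
      intro x hx
      obtain ⟨hx0, hx1, hxφ⟩ := hx
      set X : Fin (n + 1) → ℝ := Fin.cons (1 - ∑ i, x i) x with hXdef
      have key : charFn a X ≤ charFn a B + ∑ j, (cf j - 1) * (X j - B j) := by
        rw [charFn_eq a X, charFn_eq a B, ← Finset.sum_add_distrib]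
        refine Finset.sum_le_sum fun j _ => ?_
        have hXj : 0 ≤ X j := by
          refine Fin.cases ?_ (fun k => ?_) j
          · show (0:ℝ) ≤ X 0
            rw [hXdef, Fin.cons_zero]; linarith
          · show (0:ℝ) ≤ X k.succ
            rw [hXdef, Fin.cons_succ]; exact hx0 k
        have := key_ineq (a j) (X j) (B j) hXj (hBpos j)
        simp only [hcf]
        linarith [this]
      have hXB : ∑ j, (cf j - 1) * (X j - B j) = ∑ i, ν i * (x i - b i) := by
        have hvec : ∀ j, X j - B j
            = (Fin.cons (-∑ i, (x i - b i)) (fun i => x i - b i) : Fin (n + 1) → ℝ) j := by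
          intro j
          refine Fin.cases ?_ (fun k => ?_) j
          · show X 0 - B 0 = _
            rw [hXdef, hBdef]
            simp [Finset.sum_sub_distrib]
            try ring
          · show X k.succ - B k.succ = _
            rw [hXdef, hBdef]
            simp
        calc ∑ j, (cf j - 1) * (X j - B j)
            = ∑ j, (fun j => cf j - 1) j *
                (Fin.cons (-∑ i, (x i - b i)) (fun i => x i - b i) : Fin (n + 1) → ℝ) j :=
              Finset.sum_congr rfl fun j _ => by rw [hvec j]
          _ = ∑ i, ((fun j => cf j - 1) i.succ - (fun j => cf j - 1) 0) * (x i - b i) :=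
              sum_cons_mul _ _
          _ = ∑ i, ν i * (x i - b i) := Finset.sum_congr rfl fun i _ => by
              simp only [hν]; ring_nf
      have hexp : ∑ i, ν i * (x i - b i) = ∑ i, ν i * x i - ∑ i, ν i * b i := by
        simp [mul_sub, Finset.sum_sub_distrib]
      rw [hφ0, zero_add, hXB, hexp] at key
      linarith
    have htan : ∀ v : Fin n → ℝ, 0 < ∑ i, ν i * v i →
        ∃ t > 0, (fun i => b i + t * v i) ∈ Theta a := by
      intro v hv
      have hD := hasDerivAt_charFn a B (Fin.cons (-∑ i, v i) v) hBpos
      have hDval : ∑ j, (Real.log (a j) - Real.log (B j) - 1) *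
          (Fin.cons (-∑ i, v i) v : Fin (n + 1) → ℝ) j = ∑ i, ν i * v i := by
        calc ∑ j, (Real.log (a j) - Real.log (B j) - 1) *
              (Fin.cons (-∑ i, v i) v : Fin (n + 1) → ℝ) j
            = ∑ j, (fun j => cf j - 1) j * (Fin.cons (-∑ i, v i) v : Fin (n + 1) → ℝ) j :=
              Finset.sum_congr rfl fun j _ => by simp only [hcf]
          _ = ∑ i, ((fun j => cf j - 1) i.succ - (fun j => cf j - 1) 0) * v i := sum_cons_mul _ _
          _ = ∑ i, ν i * v i := Finset.sum_congr rfl fun i _ => by simp only [hν]; ring_nf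
      have hF0 : (fun t => charFn a (fun j => B j + t *
          (Fin.cons (-∑ i, v i) v : Fin (n + 1) → ℝ) j)) 0 = 0 := by
        simp only [zero_mul, add_zero]
        exact hφ0
      have hev := eventually_pos_of_hasDerivAt _ _ hD hF0 (by rw [hDval]; exact hv)
      have hco := eventually_coords B (Fin.cons (-∑ i, v i) v) hBnn
        (fun j => Or.inl (hBpos j))
      rw [hBdef] at hco hev
      exact tangent_aux a b v hco hev
    exact exists_unique_of_normal (Theta a) b ν hν0 hsupp htan
end

section
/- Fix a = (a_0, a_1, …, a_n) ∈ ℝ_{>0}^{n+1} with a_0 < 1 and a_0 + a_1 + ⋯ + a_n ≥ 1. Let α_1, …, α_n be positive real numbers and let (b_1, …, b_n) ∈ Θ_a satisfy α_1 b_1 + ⋯ + α_n b_n = min{ α_1 x_1 + ⋯ + α_n x_n : (x_1, …, x_n) ∈ Θ_a }. Then (b_1, …, b_n) does not lie on the boundary of the simplex Δ_n; that is, b_i > 0 for all i = 1, …, n and b_1 + ⋯ + b_n < 1. -/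
lemma sum_update_apply {n : ℕ} (G : Fin n → ℝ → ℝ) (f : Fin n → ℝ) (j : Fin n) (y : ℝ) :
    ∑ i, G i (Function.update f j y i) = ∑ i, G i (f i) + (G j y - G j (f j)) := by
  have h : (fun i => G i (Function.update f j y i))
      = Function.update (fun i => G i (f i)) j (G j y) := by
    funext i
    rcases eq_or_ne i j with rfl | h
    · simp
    · simp [Function.update_of_ne h]
  rw [h, Finset.sum_update_of_mem (Finset.mem_univ j),
    Finset.sum_sdiff_eq_sub (Finset.singleton_subset_iff.2 (Finset.mem_univ j)),
    Finset.sum_singleton]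
  ring

lemma double_update_sum {n : ℕ} (G : Fin n → ℝ → ℝ) (f : Fin n → ℝ) {j k : Fin n}
    (hjk : j ≠ k) (y z : ℝ) :
    ∑ i, G i (Function.update (Function.update f k z) j y i)
      = ∑ i, G i (f i) + (G j y - G j (f j)) + (G k z - G k (f k)) := by
  rw [sum_update_apply, sum_update_apply, Function.update_of_ne hjk]
  ring

lemma double_update_sum_id {n : ℕ} (f : Fin n → ℝ) {j k : Fin n}
    (hjk : j ≠ k) (y z : ℝ) :
    ∑ i, Function.update (Function.update f k z) j y i
      = ∑ i, f i + (y - f j) + (z - f k) :=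
  double_update_sum (fun _ t => t) f hjk y z

lemma double_update_sum_mul {n : ℕ} (c : Fin n → ℝ) (f : Fin n → ℝ) {j k : Fin n}
    (hjk : j ≠ k) (y z : ℝ) :
    ∑ i, c i * Function.update (Function.update f k z) j y i
      = ∑ i, c i * f i + (c j * y - c j * f j) + (c k * z - c k * f k) :=
  double_update_sum (fun i t => c i * t) f hjk y z

lemma double_update_sum_psi {n : ℕ} (w : Fin n → ℝ) (f : Fin n → ℝ) {j k : Fin n}
    (hjk : j ≠ k) (y z : ℝ) :
    ∑ i, (-(Function.update (Function.update f k z) j y i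
          * Real.log (Function.update (Function.update f k z) j y i))
        + Function.update (Function.update f k z) j y i * w i)
      = ∑ i, (-(f i * Real.log (f i)) + f i * w i)
        + ((-(y * Real.log y) + y * w j) - (-(f j * Real.log (f j)) + f j * w j))
        + ((-(z * Real.log z) + z * w k) - (-(f k * Real.log (f k)) + f k * w k)) :=
  double_update_sum (fun i t => -(t * Real.log t) + t * w i) f hjk y z

lemma charFn_cons {n : ℕ} (a : Fin (n+1) → ℝ) (x0 : ℝ) (f : Fin n → ℝ) :
    charFn a (Fin.cons x0 f) = (-(x0 * Real.log x0) + x0 * Real.log (a 0))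
      + ∑ i, (-(f i * Real.log (f i)) + f i * Real.log (a i.succ)) := by
  simp only [charFn, Fin.sum_univ_succ, Fin.cons_zero, Fin.cons_succ,
    Finset.sum_add_distrib, ← Finset.sum_neg_distrib, Finset.sum_neg_distrib]
  ring

/-- Corollary 4.4: if `a_0 < 1 ≤ a_0 + ⋯ + a_n` and a point `b ∈ Θ_a`
minimizes the positive linear form `Σ α_i x_i` on `Θ_a`, then `b` does not lie
on the boundary of the simplex `Δ_n`: all `b_i > 0` and `Σ b_i < 1`. -/
theorem minimizer_not_on_simplex_boundary (n : ℕ) (a : Fin (n + 1) → ℝ)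
    (ha : ∀ i, 0 < a i) (ha0 : a 0 < 1) (hsum : 1 ≤ ∑ i, a i)
    (α : Fin n → ℝ) (hα : ∀ i, 0 < α i)
    (b : Fin n → ℝ) (hbΘ : b ∈ Theta a)
    (hmin : ∀ x ∈ Theta a, ∑ i, α i * b i ≤ ∑ i, α i * x i) :
    (∀ i, 0 < b i) ∧ ∑ i, b i < 1 := by
  obtain ⟨hb0, hbS, hφ⟩ := hbΘ
  have ha0pos := ha 0
  -- Part 1 : the sum is strictly less than 1
  have hlt : ∑ i, b i < 1 := by
    rcases lt_or_eq_of_le hbS with h | hS1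
    · exact h
    exfalso
    set t : ℝ := 1 - a 0 with htdef
    have ht0 : 0 < t := by simp [htdef]; linarith
    have ht1 : t < 1 := by simp [htdef]; linarith
    have hE : 0 ≤ ∑ i, (-(b i * Real.log (b i)) + b i * Real.log (a i.succ)) := by
      rw [hS1] at hφ
      rw [charFn_cons] at hφ
      simpa using hφ
    have hx : (fun i => t * b i) ∈ Theta a := by
      refine ⟨fun i => mul_nonneg ht0.le (hb0 i), ?_, ?_⟩
      · rw [← Finset.mul_sum, hS1]
        linarith
      · have hsum' : ∑ i, t * b i = t := by rw [← Finset.mul_sum, hS1, mul_one]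
        rw [hsum', show (1 : ℝ) - t = a 0 by rw [htdef]; ring, charFn_cons]
        have hterm : ∀ i ∈ Finset.univ, -(t * b i * Real.log (t * b i)) + t * b i * Real.log (a i.succ)
            = -(t * Real.log t) * b i + t * (-(b i * Real.log (b i)) + b i * Real.log (a i.succ)) := by
          intro i _
          rcases eq_or_ne (b i) 0 with h0 | h0
          · simp [h0]
          · rw [Real.log_mul (ne_of_gt ht0) h0]; ring
        rw [Finset.sum_congr rfl hterm, Finset.sum_add_distrib, ← Finset.mul_sum,
          ← Finset.mul_sum, hS1]
        have hlogt : Real.log t < 0 := Real.log_neg ht0 ht1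
        nlinarith [mul_nonneg ht0.le hE]
    have hle := hmin _ hx
    have hpos : 0 < ∑ i, α i * b i := by
      have hex : ∃ k, 0 < b k := by
        by_contra hcon
        push_neg at hcon
        have hz : ∀ i ∈ Finset.univ, b i = (0:ℝ) :=
          fun i _ => le_antisymm (hcon i) (hb0 i)
        rw [Finset.sum_eq_zero hz] at hS1
        norm_num at hS1
      obtain ⟨k, hk⟩ := hex
      exact Finset.sum_pos' (fun i _ => mul_nonneg (hα i).le (hb0 i))
        ⟨k, Finset.mem_univ k, mul_pos (hα k) hk⟩
    have : ∑ i, α i * (t * b i) = t * ∑ i, α i * b i := by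
      rw [Finset.mul_sum]; exact Finset.sum_congr rfl fun i _ => by ring
    rw [this] at hle
    nlinarith
  refine ⟨?_, hlt⟩
  -- Part 2 : every coordinate is positive
  intro j
  by_contra hj'
  have hbj : b j = 0 := le_antisymm (not_lt.1 hj') (hb0 j)
  have hφb : 0 ≤ (-( (1 - ∑ i, b i) * Real.log (1 - ∑ i, b i))
        + (1 - ∑ i, b i) * Real.log (a 0))
      + ∑ i, (-(b i * Real.log (b i)) + b i * Real.log (a i.succ)) := by
    rw [charFn_cons] at hφ; exact hφ
  have hex : ∃ k, 0 < b k := by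
    by_contra hcon
    push_neg at hcon
    have hz : ∀ i ∈ Finset.univ, b i = (0:ℝ) := fun i _ => le_antisymm (hcon i) (hb0 i)
    have h1 : ∑ i, b i = 0 := Finset.sum_eq_zero hz
    have h2 : ∑ i, (-(b i * Real.log (b i)) + b i * Real.log (a i.succ)) = 0 :=
      Finset.sum_eq_zero fun i _ => by rw [hz i (Finset.mem_univ i)]; simp
    rw [h1, h2] at hφb
    simp at hφb
    have := Real.log_neg ha0pos ha0
    linarith
  obtain ⟨k, hk⟩ := hex
  have hjk : j ≠ k := by
    intro h; rw [h] at hbj; rw [hbj] at hk; exact lt_irrefl 0 hk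
  have hαk := hα k
  set C : ℝ := 2 * α j / α k with hCdef
  have hC0 : 0 < C := div_pos (by linarith [hα j]) hαk
  set x0 : ℝ := 1 - ∑ i, b i with hx0def
  have hx00 : 0 < x0 := by simp [hx0def]; linarith
  set R : ℝ → ℝ := fun ε =>
    ((-( (x0 - (1-C)*ε) * Real.log (x0 - (1-C)*ε)) + (x0 - (1-C)*ε) * Real.log (a 0))
      - (-(x0 * Real.log x0) + x0 * Real.log (a 0)))
    + ((-( (b k - C*ε) * Real.log (b k - C*ε)) + (b k - C*ε) * Real.log (a k.succ))
      - (-(b k * Real.log (b k)) + b k * Real.log (a k.succ)))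
    + ε * Real.log (a j.succ) with hRdef
  have hR0 : R 0 = 0 := by simp [hRdef]
  -- derivative of R at 0
  have haff : HasDerivAt (fun ε : ℝ => x0 - (1-C)*ε) (-((1-C)*1)) 0 :=
    HasDerivAt.const_sub x0 ((hasDerivAt_id 0).const_mul (1-C))
  have haffk : HasDerivAt (fun ε : ℝ => b k - C*ε) (-(C*1)) 0 :=
    HasDerivAt.const_sub (b k) ((hasDerivAt_id 0).const_mul C)
  have hg : HasDerivAt (fun t : ℝ => t * Real.log t) (Real.log x0 + 1)
      ((fun ε : ℝ => x0 - (1-C)*ε) 0) := by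
    rw [show (fun ε : ℝ => x0 - (1-C)*ε) 0 = x0 by norm_num]
    exact Real.hasDerivAt_mul_log hx00.ne'
  have hgk : HasDerivAt (fun t : ℝ => t * Real.log t) (Real.log (b k) + 1)
      ((fun ε : ℝ => b k - C*ε) 0) := by
    rw [show (fun ε : ℝ => b k - C*ε) 0 = b k by norm_num]
    exact Real.hasDerivAt_mul_log hk.ne'
  have hA : HasDerivAt (fun ε : ℝ => (x0 - (1-C)*ε) * Real.log (x0 - (1-C)*ε))
      ((Real.log x0 + 1) * (-((1-C)*1))) 0 := by have h := hg.comp 0 haff; exact h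
  have hB : HasDerivAt (fun ε : ℝ => (b k - C*ε) * Real.log (b k - C*ε))
      ((Real.log (b k) + 1) * (-(C*1))) 0 := by have h := hgk.comp 0 haffk; exact h
  obtain ⟨D, hD⟩ : ∃ D, HasDerivAt R D 0 :=
    ⟨_, (((hA.neg.add (haff.mul_const _)).sub_const _).add
        ((hB.neg.add (haffk.mul_const _)).sub_const _)).add
      ((hasDerivAt_id 0).mul_const _)⟩
  have hmono : nhdsWithin (0:ℝ) (Set.Ioi 0) ≤ nhdsWithin 0 {(0:ℝ)}ᶜ :=
    nhdsWithin_mono 0 (fun x hx => ne_of_gt hx)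
  have hslope : Filter.Tendsto (fun ε => R ε / ε) (nhdsWithin 0 (Set.Ioi 0)) (nhds D) := by
    have h2 := (hasDerivAt_iff_tendsto_slope.mp hD).mono_left hmono
    have heq : slope R 0 = fun ε => R ε / ε := by
      funext ε; rw [slope_def_field, hR0, sub_zero, sub_zero]
    rwa [heq] at h2
  have hT : Filter.Tendsto (fun ε => R ε / ε + -Real.log ε)
      (nhdsWithin 0 (Set.Ioi 0)) Filter.atTop :=
    hslope.add_atTop (Filter.Tendsto.comp Filter.tendsto_neg_atBot_atTop Real.tendsto_log_nhdsGT_zero)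
  have E1 : ∀ᶠ ε in nhdsWithin (0:ℝ) (Set.Ioi 0), 0 < ε :=
    eventually_mem_nhdsWithin
  have E2 : ∀ᶠ ε in nhdsWithin (0:ℝ) (Set.Ioi 0), C * ε < b k := by
    refine Filter.Tendsto.eventually_lt_const hk ?_
    have : Filter.Tendsto (fun ε : ℝ => C * ε) (nhds 0) (nhds (C * 0)) :=
      (continuous_const.mul continuous_id).tendsto 0
    simpa using this.mono_left nhdsWithin_le_nhds
  have E3 : ∀ᶠ ε in nhdsWithin (0:ℝ) (Set.Ioi 0), ∑ i, b i + (1-C) * ε < 1 := by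
    refine Filter.Tendsto.eventually_lt_const hlt ?_
    have : Filter.Tendsto (fun ε : ℝ => ∑ i, b i + (1-C) * ε) (nhds 0)
        (nhds (∑ i, b i + (1-C) * 0)) :=
      (continuous_const.add (continuous_const.mul continuous_id)).tendsto 0
    simpa using this.mono_left nhdsWithin_le_nhds
  have E4 : ∀ᶠ ε in nhdsWithin (0:ℝ) (Set.Ioi 0), 0 < R ε / ε + -Real.log ε :=
    hT.eventually_gt_atTop 0
  obtain ⟨ε, hε, hCε, hSε, hRε⟩ := (E1.and (E2.and (E3.and E4))).exists
  set x : Fin n → ℝ := Function.update (Function.update b k (b k - C*ε)) j ε with hxdef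
  have hxsum : ∑ i, x i = ∑ i, b i + (1-C) * ε := by
    rw [hxdef, double_update_sum_id b hjk, hbj]; ring
  have hxΘ : x ∈ Theta a := by
    refine ⟨?_, ?_, ?_⟩
    · intro i
      rcases eq_or_ne i j with rfl | hij
      · simp [hxdef]
        exact hε.le
      rcases eq_or_ne i k with rfl | hik
      · rw [hxdef, Function.update_of_ne hij, Function.update_self]
        linarith
      · rw [hxdef, Function.update_of_ne hij, Function.update_of_ne hik]
        exact hb0 i
    · rw [hxsum]; exact hSε.le
    · rw [charFn_cons, hxsum]
      rw [hxdef, double_update_sum_psi (fun i => Real.log (a i.succ)) b hjk]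
      have h1mx : (1:ℝ) - (∑ i, b i + (1-C) * ε) = x0 - (1-C)*ε := by
        rw [hx0def]; ring
      rw [h1mx, hbj]
      have hΔ : 0 < R ε - ε * Real.log ε := by
        have h1 : R ε - ε * Real.log ε = (R ε / ε + -Real.log ε) * ε := by
          field_simp
          ring
        rw [h1]
        exact mul_pos hRε hε
      have hΔ' : R ε - ε * Real.log ε
          = (-( (x0 - (1-C)*ε) * Real.log (x0 - (1-C)*ε)) + (x0 - (1-C)*ε) * Real.log (a 0))
            - (-(x0 * Real.log x0) + x0 * Real.log (a 0))
            + ((-(ε * Real.log ε) + ε * Real.log (a j.succ)) - (-((0:ℝ) * Real.log 0) + 0 * Real.log (a j.succ)))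
            + ((-( (b k - C*ε) * Real.log (b k - C*ε)) + (b k - C*ε) * Real.log (a k.succ))
              - (-(b k * Real.log (b k)) + b k * Real.log (a k.succ))) := by
        simp only [hRdef]; ring
      linarith [hφb]
  have hle := hmin x hxΘ
  have hxα : ∑ i, α i * x i = ∑ i, α i * b i - α j * ε := by
    rw [hxdef, double_update_sum_mul α b hjk, hbj]
    have : α k * C = 2 * α j := by
      rw [hCdef]; field_simp
    nlinarith [this]
  rw [hxα] at hle
  nlinarith [hα j]
end

section
/- Fix a positive integer l and positive rational numbers a'_1, …, a'_n with a'_1 + ⋯ + a'_n < 1 and a'_i < 1/l for every i = 1, …, n; set a'_0 = 1 − a'_1 − ⋯ − a'_n and a' = (a'_0, a'_1, …, a'_n). For a rational number λ > 1 let K_λ = { (x_1, …, x_n) ∈ Δ_n : φ_{a'}(1 − x_1 − ⋯ − x_n, x_1, …, x_n) + log λ ≥ 0 }. Then there exists a rational number λ > 1 such that K_λ ⊆ (0, 1/l)^n. -/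
/-- Per-term Gibbs inequality. -/
lemma gibbs_term_le {b y : ℝ} (hb : 0 < b) (hy : 0 ≤ y) :
    y * Real.log b - y * Real.log y ≤ b - y := by
  rcases eq_or_lt_of_le hy with h | h
  · simp [← h]; positivity
  · have h1 : Real.log (b / y) ≤ b / y - 1 :=
      Real.log_le_sub_one_of_pos (by positivity)
    have h2 : Real.log (b / y) = Real.log b - Real.log y :=
      Real.log_div (ne_of_gt hb) (ne_of_gt h)
    have := mul_le_mul_of_nonneg_left h1 hy
    rw [h2] at this
    calc y * Real.log b - y * Real.log y = y * (Real.log b - Real.log y) := by ring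
      _ ≤ y * (b / y - 1) := this
      _ = b - y := by field_simp

lemma gibbs_term_lt {b y : ℝ} (hb : 0 < b) (hy : 0 ≤ y) (hne : y ≠ b) :
    y * Real.log b - y * Real.log y < b - y := by
  rcases eq_or_lt_of_le hy with h | h
  · simp [← h]; linarith
  · have hby : b / y ≠ 1 := by
      intro hc
      have hbe : b = y := by field_simp at hc; linarith
      exact hne hbe.symm
    have h1 : Real.log (b / y) < b / y - 1 :=
      Real.log_lt_sub_one_of_pos (by positivity) hby
    have h2 : Real.log (b / y) = Real.log b - Real.log y :=
      Real.log_div (ne_of_gt hb) (ne_of_gt h)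
    have := mul_lt_mul_of_pos_left h1 h
    rw [h2] at this
    calc y * Real.log b - y * Real.log y = y * (Real.log b - Real.log y) := by ring
      _ < y * (b / y - 1) := this
      _ = b - y := by field_simp

/-- Strict Gibbs inequality: if `y ≠ b` are probability vectors with `b > 0`,
then `-Σ y_i log y_i + Σ y_i log b_i < 0`. -/
lemma gibbs_strict {m : ℕ} (b y : Fin m → ℝ) (hb : ∀ i, 0 < b i)
    (hy : ∀ i, 0 ≤ y i) (hsum : ∑ i, y i = ∑ i, b i)
    (j : Fin m) (hne : y j ≠ b j) :
    -∑ i, y i * Real.log (y i) + ∑ i, y i * Real.log (b i) < 0 := by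
  have key : ∑ i, (y i * Real.log (b i) - y i * Real.log (y i)) <
      ∑ i, (b i - y i) := by
    refine Finset.sum_lt_sum (fun i _ => gibbs_term_le (hb i) (hy i)) ?_
    exact ⟨j, Finset.mem_univ j, gibbs_term_lt (hb j) (hy j) hne⟩
  rw [Finset.sum_sub_distrib] at key
  rw [Finset.sum_sub_distrib] at key
  linarith

/-- The key Claim in the proof of the Proposition at the end of Section 2:
with `a'_1, …, a'_n` positive rationals with `Σ a'_i < 1`, `a'_i < 1/l`, and
`a'_0 = 1 − a'_1 − ⋯ − a'_n`, there is a rational `λ > 1` such that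
`K_λ = {x ∈ Δ_n : φ_{a'}(1 − Σ x_i, x_1, …, x_n) + log λ ≥ 0} ⊆ (0, 1/l)^n`. -/
theorem exists_lambda_K_subset (n : ℕ) (l : ℕ) (hl : 1 ≤ l)
    (a' : Fin n → ℚ) (ha' : ∀ i, 0 < a' i)
    (hsum : ∑ i, a' i < 1) (hsmall : ∀ i, a' i < 1 / (l : ℚ)) :
    ∃ lam : ℚ, 1 < lam ∧
      ∀ x : Fin n → ℝ,
        ((∀ i, 0 ≤ x i) ∧ ∑ i, x i ≤ 1 ∧
          0 ≤ charFn (Fin.cons (1 - ∑ i, (a' i : ℝ)) (fun i => ((a' i : ℝ))))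
                (Fin.cons (1 - ∑ i, x i) x) + Real.log (lam : ℝ)) →
        ∀ i, 0 < x i ∧ x i < 1 / (l : ℝ) := by
  -- Set up real versions of hypotheses
  have hsumR : ∑ i, (a' i : ℝ) < 1 := by exact_mod_cast hsum
  have ha'R : ∀ i, (0 : ℝ) < (a' i : ℝ) := fun i => by exact_mod_cast ha' i
  have hsmallR : ∀ i, (a' i : ℝ) < 1 / (l : ℝ) := fun i => by
    have : ((a' i : ℝ)) < ((1 / (l:ℚ) : ℚ) : ℝ) := by exact_mod_cast hsmall i
    simpa using this
  set b : Fin (n + 1) → ℝ :=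
    Fin.cons (1 - ∑ i, (a' i : ℝ)) (fun i => ((a' i : ℝ))) with hbdef
  have hb : ∀ i, 0 < b i := by
    intro i
    refine Fin.cases ?_ ?_ i
    · simpa [hbdef] using hsumR
    · intro j; simpa [hbdef] using ha'R j
  -- the function f
  set f : (Fin n → ℝ) → ℝ := fun x => charFn b (Fin.cons (1 - ∑ i, x i) x) with hfdef
  have hfcont : Continuous f := by
    have hcons : Continuous fun x : Fin n → ℝ =>
        (Fin.cons (1 - ∑ i, x i) x : Fin (n + 1) → ℝ) := by
      refine continuous_pi fun i => ?_
      refine Fin.cases ?_ ?_ i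
      · simp only [Fin.cons_zero]; exact (continuous_const.sub (continuous_finset_sum _
          (fun i _ => continuous_apply i)))
      · intro j
        simpa using (continuous_apply j)
    have hchar : Continuous fun y : Fin (n + 1) → ℝ => charFn b y := by
      unfold charFn
      refine Continuous.add ?_ ?_
      · exact (continuous_finset_sum _ (fun i _ =>
          Real.continuous_mul_log.comp (continuous_apply i))).neg
      · exact continuous_finset_sum _ (fun i _ =>
          (continuous_apply i).mul continuous_const)
    exact hchar.comp hcons
  -- the sets
  set U : Set (Fin n → ℝ) := {x | ∀ i, 0 < x i ∧ x i < 1 / (l : ℝ)} with hUdef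
  set D : Set (Fin n → ℝ) := {x | (∀ i, 0 ≤ x i) ∧ ∑ i, x i ≤ 1} with hDdef
  have hUopen : IsOpen U := by
    have : U = ⋂ i, ({x : Fin n → ℝ | 0 < x i} ∩ {x | x i < 1 / (l : ℝ)}) := by
      ext x; simp [hUdef, Set.mem_iInter, forall_and]
    rw [this]
    exact isOpen_iInter_of_finite fun i =>
      (isOpen_lt continuous_const (continuous_apply i)).inter
        (isOpen_lt (continuous_apply i) continuous_const)
  have hDclosed : IsClosed D := by
    have h1 : IsClosed {x : Fin n → ℝ | ∀ i, 0 ≤ x i} := by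
      rw [Set.setOf_forall]
      exact isClosed_iInter fun i => isClosed_le continuous_const (continuous_apply i)
    have h2 : IsClosed {x : Fin n → ℝ | ∑ i, x i ≤ 1} :=
      isClosed_le (continuous_finset_sum _ (fun i _ => continuous_apply i)) continuous_const
    exact h1.inter h2
  set C : Set (Fin n → ℝ) := D \ U with hCdef
  have hCsub : C ⊆ Set.Icc (0 : Fin n → ℝ) 1 := by
    intro x hx
    obtain ⟨⟨hx0, hx1⟩, -⟩ := hx
    constructor
    · intro i; exact hx0 i
    · intro i
      calc x i ≤ ∑ j, x j := Finset.single_le_sum (fun j _ => hx0 j) (Finset.mem_univ i)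
        _ ≤ 1 := hx1
  have hCcompact : IsCompact C :=
    IsCompact.of_isClosed_subset isCompact_Icc (hDclosed.sdiff hUopen) hCsub
  -- strict negativity of f on C
  have hneg : ∀ x ∈ C, f x < 0 := by
    rintro x ⟨⟨hx0, hx1⟩, hxU⟩
    simp only [hUdef, Set.mem_setOf_eq, not_forall] at hxU
    obtain ⟨j, hj⟩ := hxU
    have hxj : x j ≠ (a' j : ℝ) := by
      intro hc
      exact hj ⟨hc ▸ ha'R j, hc ▸ hsmallR j⟩
    have hy : ∀ i, 0 ≤ (Fin.cons (1 - ∑ i, x i) x : Fin (n + 1) → ℝ) i := by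
      intro i
      refine Fin.cases ?_ ?_ i
      · simpa using hx1
      · intro k; simpa using hx0 k
    have hsumeq : ∑ i, (Fin.cons (1 - ∑ i, x i) x : Fin (n + 1) → ℝ) i = ∑ i, b i := by
      rw [hbdef, Fin.sum_cons, Fin.sum_cons]
      ring
    have := gibbs_strict b (Fin.cons (1 - ∑ i, x i) x) hb hy hsumeq j.succ
      (by simpa [hbdef] using hxj)
    simpa [hfdef, charFn] using this
  -- choose lambda
  rcases Set.eq_empty_or_nonempty C with hCe | hCne
  · refine ⟨2, by norm_num, ?_⟩
    intro x ⟨hx0, hx1, _⟩ i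
    have hxD : x ∈ D := ⟨hx0, hx1⟩
    by_contra hc
    have hxC : x ∈ C := ⟨hxD, fun hU => hc (hU i)⟩
    rw [hCe] at hxC
    exact hxC
  · obtain ⟨x₀, hx₀C, hmax⟩ := hCcompact.exists_isMaxOn hCne hfcont.continuousOn
    have hm : f x₀ < 0 := hneg x₀ hx₀C
    have h1 : (1 : ℝ) < Real.exp (-(f x₀)) := Real.one_lt_exp_iff.mpr (by linarith)
    obtain ⟨lam, hlam1, hlam2⟩ := exists_rat_btwn h1
    have hlam1' : (1 : ℚ) < lam := by exact_mod_cast hlam1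
    refine ⟨lam, hlam1', ?_⟩
    intro x ⟨hx0, hx1, hxchar⟩
    have hxD : x ∈ D := ⟨hx0, hx1⟩
    have hloglam : Real.log (lam : ℝ) < -(f x₀) := by
      have := Real.log_lt_log (by linarith : (0:ℝ) < (lam : ℝ)) hlam2
      rwa [Real.log_exp] at this
    by_contra hc
    rw [not_forall] at hc
    obtain ⟨i, hi⟩ := hc
    have hxC : x ∈ C := ⟨hxD, fun hU => hi (hU i)⟩
    have hfx : f x ≤ f x₀ := hmax hxC
    have : (0:ℝ) ≤ f x + Real.log (lam : ℝ) := hxchar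
    linarith
end
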